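/- arXiv:1601.03693 — 3 statements merged into one kernel-verified Lean document; each statement's English description precedes it below -/
import Mathlib

section
/- Let (G, G_•) be a filtered group and q: {0,1}^n → G. Then q ∈ C^n(G_•) if and only if for every m and every m-face map φ: {0,1}^m → {0,1}^n, the Gray-code alternating product σ_m(q ∘ φ) lies in G_m. -/
open Finset

/-- Embedding of the discrete cube `{0,1}^n` into `ℤ^n`. -/
def cubeEmb {n : ℕ} (v : Fin n → Bool) : Fin n → ℤ := fun i => if v i then 1 else 0

/-- A discrete-cube morphism: the restriction to `{0,1}^m` of an affine
homomorphism `ℤ^m → ℤ^n`. -/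
def IsCubeMorphism {m n : ℕ} (φ : (Fin m → Bool) → (Fin n → Bool)) : Prop :=
  ∃ (M : (Fin m → ℤ) →+ (Fin n → ℤ)) (t : Fin n → ℤ),
    ∀ v : Fin m → Bool, cubeEmb (φ v) = M (cubeEmb v) + t

/-- A face of `{0,1}^n` of codimension `c`: fix `c` coordinates. -/
def IsFaceOfCodim {n : ℕ} (F : Set (Fin n → Bool)) (c : ℕ) : Prop :=
  ∃ (I : Finset (Fin n)) (x : Fin n → Bool), I.card = c ∧
    F = {v : Fin n → Bool | ∀ i ∈ I, v i = x i}

/-- An `m`-face map into `{0,1}^n`: an injective cube morphism whose image is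
an `m`-dimensional face. -/
def IsFaceMap {m n : ℕ} (φ : (Fin m → Bool) → (Fin n → Bool)) : Prop :=
  IsCubeMorphism φ ∧ Function.Injective φ ∧ IsFaceOfCodim (Set.range φ) (n - m)

/-- The number of coordinates of `v` equal to `1`. -/
def weight {n : ℕ} (v : Fin n → Bool) : ℕ := (Finset.univ.filter fun i => v i = true).card

/-- A (pre)filtration on a group: a decreasing chain of subgroups with
`[G_i, G_j] ⊆ G_{i+j}`. -/
def IsGrpFiltrationHK {G : Type*} [Group G] (Gf : ℕ → Subgroup G) : Prop :=
  (∀ i, Gf (i + 1) ≤ Gf i) ∧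
  (∀ i j : ℕ, ∀ x ∈ Gf i, ∀ y ∈ Gf j, x⁻¹ * y⁻¹ * x * y ∈ Gf (i + j))

open Classical in
/-- The face-group element `g^F`: equal to `g` on `F` and to the identity elsewhere. -/
noncomputable def faceEl {G : Type*} [Group G] {n : ℕ} (F : Set (Fin n → Bool)) (g : G) :
    (Fin n → Bool) → G :=
  fun v => if v ∈ F then g else 1

/-- The Host–Kra cube group `C^n(G_•)`: the subgroup of `G^{{0,1}^n}` generated by
the face groups. -/
noncomputable def hkCubes {G : Type*} [Group G] (Gf : ℕ → Subgroup G) (n : ℕ) :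
    Subgroup ((Fin n → Bool) → G) :=
  Subgroup.closure { f | ∃ (c : ℕ) (F : Set (Fin n → Bool)) (g : G),
    IsFaceOfCodim F c ∧ g ∈ Gf c ∧ f = faceEl F g }

/-- Restriction of a map on `{0,1}^{n+1}` to the lower face `{v : v_j = 0}`,
viewed as a map on `{0,1}^n`. -/
def lowerFaceRestr {X : Type*} {n : ℕ} (q : (Fin (n + 1) → Bool) → X) (j : Fin (n + 1)) :
    (Fin n → Bool) → X :=
  fun v => q (j.insertNth false v)

/-- An `(n+1)`-corner: every restriction to an `n`-face containing `0^{n+1}` is a cube. -/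
def IsNSCorner {X : Type*} (C : ∀ n, ((Fin n → Bool) → X) → Prop) (n : ℕ)
    (q' : (Fin (n + 1) → Bool) → X) : Prop :=
  ∀ j : Fin (n + 1), C n (lowerFaceRestr q' j)

/-- `q` is a completion of the corner `q'`. -/
def IsNSCompletion {X : Type*} (C : ∀ n, ((Fin n → Bool) → X) → Prop) (n : ℕ)
    (q' q : (Fin (n + 1) → Bool) → X) : Prop :=
  C (n + 1) q ∧ ∀ v : Fin (n + 1) → Bool, v ≠ (fun _ => true) → q v = q' v

/-- The nilspace axioms: composition, ergodicity and corner completion. -/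
def IsNilspace {X : Type*} (C : ∀ n, ((Fin n → Bool) → X) → Prop) : Prop :=
  (∀ (m n : ℕ) (φ : (Fin m → Bool) → (Fin n → Bool)), IsCubeMorphism φ →
      ∀ q, C n q → C m (q ∘ φ)) ∧
  (∀ q : (Fin 1 → Bool) → X, C 1 q) ∧
  (∀ n (q' : (Fin (n + 1) → Bool) → X), IsNSCorner C n q' → ∃ q, IsNSCompletion C n q' q)

/-- A `k`-step nilspace: a nilspace in which every `(k+1)`-corner has a unique
completion. -/
def IsKStepNilspace {X : Type*} (C : ∀ n, ((Fin n → Bool) → X) → Prop) (k : ℕ) : Prop :=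
  IsNilspace C ∧
  ∀ q' : (Fin (k + 1) → Bool) → X, IsNSCorner C k q' → ∃! q, IsNSCompletion C k q' q

/-- The Gray-code alternating product `σ_n`. -/
def graySigma {G : Type*} [Group G] : (n : ℕ) → ((Fin n → Bool) → G) → G
  | 0, g => g (fun i => i.elim0)
  | n + 1, g => (graySigma n (fun v => g (Fin.snoc v true)))⁻¹ *
      graySigma n (fun v => g (Fin.snoc v false))

/-- The difference operator `∂_h g (x) = g(x)⁻¹ g(xh)`. -/
def mulDiff {H G : Type*} [Group H] [Group G] (h : H) (g : H → G) : H → G :=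
  fun x => (g x)⁻¹ * g (x * h)

/-- `g : H → G` is a polynomial map adapted to the filtrations `H_•, G_•`. -/
def IsPolyMap {H G : Type*} [Group H] [Group G] (Hf : ℕ → Subgroup H)
    (Gf : ℕ → Subgroup G) (g : H → G) : Prop :=
  ∀ (n : ℕ) (d : Fin n → ℕ) (h : Fin n → H), (∀ j, h j ∈ Hf (d j)) →
    ∀ x : H, ((List.ofFn h).foldr mulDiff g) x ∈ Gf (∑ j, d j)

/-- The `k`-arrow `⟨q_0, q_1⟩_k : {0,1}^{n+k} → X`. -/
def arrowMap {X : Type*} {n k : ℕ} (q0 q1 : (Fin n → Bool) → X) :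
    (Fin (n + k) → Bool) → X :=
  fun v =>
    if ∀ j : Fin k, v (Fin.natAdd n j) = true
    then q1 (fun i => v (Fin.castAdd k i))
    else q0 (fun i => v (Fin.castAdd k i))


section Aux
variable {G : Type*} [Group G] {Gf : ℕ → Subgroup G} {m n : ℕ}

lemma filt_anti (hGf : IsGrpFiltrationHK Gf) : ∀ {i j : ℕ}, i ≤ j → Gf j ≤ Gf i := by
  intro i j h
  induction h with
  | refl => exact le_rfl
  | step h ih => exact le_trans (hGf.1 _) (by exact ih)

lemma filt_shift (hGf : IsGrpFiltrationHK Gf) : IsGrpFiltrationHK (fun k => Gf (k + 1)) := by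
  refine ⟨fun i => hGf.1 _, fun i j x hx y hy => ?_⟩
  have := hGf.2 (i+1) (j+1) x hx y hy
  exact filt_anti hGf (by omega) this

lemma faceEl_mem_hk (hGf : IsGrpFiltrationHK Gf) {S : Set (Fin n → Bool)} {k : ℕ} {g : G}
    (hS : S = ∅ ∨ ∃ (I' : Finset (Fin n)) (x' : Fin n → Bool), I'.card ≤ k ∧
      S = {v : Fin n → Bool | ∀ j ∈ I', v j = x' j})
    (hg : g ∈ Gf k) : faceEl S g ∈ hkCubes Gf n := by
  rcases hS with h | ⟨I', x', hcard, hSet⟩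
  · have : faceEl S g = 1 := by
      funext v
      simp only [faceEl, h]
      simp
    rw [this]; exact one_mem _
  · exact Subgroup.subset_closure
      ⟨I'.card, S, g, ⟨I', x', rfl, hSet⟩, filt_anti hGf hcard hg, rfl⟩

lemma faceEl_inv (F : Set (Fin n → Bool)) (g : G) :
    (faceEl F g)⁻¹ = faceEl F g⁻¹ := by
  funext v
  simp only [faceEl, Pi.inv_apply]
  split <;> simp

lemma boolInt_inj {p q : Bool} (h : (if p then (1:ℤ) else 0) = if q then 1 else 0) : p = q := by
  cases p <;> cases q <;> simp_all

lemma cubeEmb_eq_sum (v : Fin m → Bool) :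
    cubeEmb v = ∑ j ∈ Finset.univ.filter (fun j => v j), Pi.single j (1:ℤ) := by
  funext k
  rw [Finset.sum_apply, Finset.sum_pi_single]
  simp [cubeEmb]

lemma coord_classify {φ : (Fin m → Bool) → (Fin n → Bool)} (hψ : IsCubeMorphism φ)
    (i : Fin n) :
    (∀ v w, φ v i = φ w i) ∨ ∃ (j : Fin m) (b : Bool), ∀ v, φ v i = xor (v j) b := by
  classical
  obtain ⟨M, t, hM⟩ := hψ
  set a : Fin m → ℤ := fun j => M (Pi.single j 1) i with ha
  have key : ∀ v : Fin m → Bool,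
      (if φ v i then (1:ℤ) else 0) = t i + ∑ j ∈ Finset.univ.filter (fun j => v j), a j := by
    intro v
    have h1 := congrFun (hM v) i
    have h2 : cubeEmb (φ v) i = (if φ v i then (1:ℤ) else 0) := rfl
    rw [h2] at h1
    rw [h1, cubeEmb_eq_sum, map_sum]
    simp only [Pi.add_apply, Finset.sum_apply]
    ring
  have hval : ∀ v : Fin m → Bool,
      t i + ∑ j ∈ Finset.univ.filter (fun j => v j), a j = 0 ∨
      t i + ∑ j ∈ Finset.univ.filter (fun j => v j), a j = 1 := by
    intro v
    rw [← key v]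
    by_cases h : φ v i <;> simp [h]
  have hc : t i = 0 ∨ t i = 1 := by
    have := hval (fun _ => false)
    simpa using this
  have hsingle : ∀ j : Fin m, t i + a j = 0 ∨ t i + a j = 1 := by
    intro j
    have := hval (fun k => k = j)
    have hf : Finset.univ.filter (fun k : Fin m => k = j) = {j} := by
      ext k; simp
    simpa [hf] using this
  have hpair : ∀ j k : Fin m, j ≠ k → t i + (a j + a k) = 0 ∨ t i + (a j + a k) = 1 := by
    intro j k hjk
    have := hval (fun l => l = j ∨ l = k)
    have hf : Finset.univ.filter (fun l : Fin m => l = j ∨ l = k) = {j, k} := by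
      ext l; simp
    simp only [decide_eq_true_eq] at this
    rw [hf] at this
    rwa [Finset.sum_pair hjk] at this
  by_cases hall : ∀ j, a j = 0
  · left
    intro v w
    apply boolInt_inj
    rw [key v, key w]
    have hz : ∀ (u : Fin m → Bool), ∑ j ∈ Finset.univ.filter (fun j => u j), a j = 0 :=
      fun u => Finset.sum_eq_zero (fun j _ => hall j)
    rw [hz, hz]
  · push_neg at hall
    obtain ⟨j, hj⟩ := hall
    right
    have hothers : ∀ k, k ≠ j → a k = 0 := by
      intro k hk
      by_contra hak
      have h1 := hsingle j
      have h2 := hsingle k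
      have h3 := hpair j k (Ne.symm hk)
      omega
    have hsum : ∀ v : Fin m → Bool,
        ∑ l ∈ Finset.univ.filter (fun l => v l), a l = if v j then a j else 0 := by
      intro v
      have : ∀ l ∈ Finset.univ.filter (fun l => v l), a l = if l = j then a j else 0 := by
        intro l _
        by_cases h : l = j
        · simp [h]
        · simp [h, hothers l h]
      rw [Finset.sum_congr rfl this, Finset.sum_ite_eq' _ j (fun _ => a j)]
      simp
    have hcase : (t i = 0 ∧ a j = 1) ∨ (t i = 1 ∧ a j = -1) := by
      have := hsingle j
      omega
    rcases hcase with ⟨hc0, haj⟩ | ⟨hc1, haj⟩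
    · refine ⟨j, false, fun v => ?_⟩
      apply boolInt_inj
      rw [key v, hsum, hc0, haj]
      by_cases h : v j <;> simp [h]
    · refine ⟨j, true, fun v => ?_⟩
      apply boolInt_inj
      rw [key v, hsum, hc1, haj]
      by_cases h : v j <;> simp [h]

end Aux

section Restr
variable {G : Type*} [Group G] {Gf : ℕ → Subgroup G} {m n : ℕ}

lemma preimage_constraints {ψ : (Fin m → Bool) → (Fin n → Bool)} (hψ : IsCubeMorphism ψ)
    (I : Finset (Fin n)) (x : Fin n → Bool) :
    {v : Fin m → Bool | ∀ i ∈ I, ψ v i = x i} = ∅ ∨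
    ∃ (I' : Finset (Fin m)) (x' : Fin m → Bool), I'.card ≤ I.card ∧
      {v : Fin m → Bool | ∀ i ∈ I, ψ v i = x i} =
        {v : Fin m → Bool | ∀ j ∈ I', v j = x' j} := by
  classical
  induction I using Finset.induction_on with
  | empty =>
    right
    exact ⟨∅, fun _ => false, by simp, by simp⟩
  | @insert i₀ I hi₀ ih =>
    have hset : {v : Fin m → Bool | ∀ i ∈ insert i₀ I, ψ v i = x i} =
        {v : Fin m → Bool | ψ v i₀ = x i₀} ∩ {v | ∀ i ∈ I, ψ v i = x i} := by
      ext v; simp only [Set.mem_setOf_eq, Set.mem_inter_iff, Finset.mem_insert]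
      constructor
      · exact fun h => ⟨h i₀ (Or.inl rfl), fun i hi => h i (Or.inr hi)⟩
      · rintro ⟨h0, h⟩ i (rfl | hi)
        · exact h0
        · exact h i hi
    rcases coord_classify hψ i₀ with hconst | ⟨j, b, hj⟩
    · by_cases hx : ψ (fun _ => false) i₀ = x i₀
      · have h0 : {v : Fin m → Bool | ψ v i₀ = x i₀} = Set.univ := by
          ext v; simp only [Set.mem_setOf_eq, Set.mem_univ, iff_true]
          rw [hconst v (fun _ => false)]; exact hx
        rw [hset, h0, Set.univ_inter]
        rcases ih with h | ⟨I', x', hcard, hEq⟩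
        · exact Or.inl h
        · exact Or.inr ⟨I', x', le_trans hcard (by simp [Finset.card_insert_of_notMem hi₀]), hEq⟩
      · left
        rw [hset]
        apply Set.eq_empty_of_forall_notMem
        rintro v ⟨h0, -⟩
        exact hx (by rw [hconst (fun _ => false) v]; exact h0)
    · -- coordinate i₀ is ± coordinate j
      have hcond : ∀ v : Fin m → Bool, (ψ v i₀ = x i₀) ↔ v j = xor (x i₀) b := by
        intro v
        rw [hj v]
        cases hv : v j <;> cases hb : b <;> cases hx : x i₀ <;> simp
      rcases ih with h | ⟨I', x', hcard, hEq⟩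
      · left
        rw [hset, h, Set.inter_empty]
      · by_cases hjI : j ∈ I'
        · by_cases hbit : x' j = xor (x i₀) b
          · right
            refine ⟨I', x', le_trans hcard (by simp [Finset.card_insert_of_notMem hi₀]), ?_⟩
            rw [hset, hEq]
            ext v
            simp only [Set.mem_inter_iff, Set.mem_setOf_eq, hcond v]
            constructor
            · exact fun h => h.2
            · intro h
              exact ⟨by rw [h j hjI, hbit], h⟩
          · left
            rw [hset, hEq]
            apply Set.eq_empty_of_forall_notMem
            rintro v ⟨h0, h⟩
            simp only [Set.mem_setOf_eq] at h0 h
            rw [hcond v] at h0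
            exact hbit (by rw [← h j hjI, h0])
        · right
          refine ⟨insert j I', Function.update x' j (xor (x i₀) b), ?_, ?_⟩
          · rw [Finset.card_insert_of_notMem hjI, Finset.card_insert_of_notMem hi₀]
            omega
          · rw [hset, hEq]
            ext v
            simp only [Set.mem_inter_iff, Set.mem_setOf_eq, hcond v, Finset.mem_insert]
            constructor
            · rintro ⟨h0, h⟩ k (rfl | hk)
              · rw [Function.update_self]; exact h0
              · rw [Function.update_of_ne (by rintro rfl; exact hjI hk)]
                exact h k hk
            · intro h
              refine ⟨?_, fun k hk => ?_⟩
              · have := h j (Or.inl rfl)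
                rwa [Function.update_self] at this
              · have := h k (Or.inr hk)
                rwa [Function.update_of_ne (by rintro rfl; exact hjI hk)] at this

/-- Restriction along any cube morphism preserves membership in the HK cube group. -/
lemma hk_comp_morphism (hGf : IsGrpFiltrationHK Gf) {ψ : (Fin m → Bool) → (Fin n → Bool)}
    (hψ : IsCubeMorphism ψ) {q : (Fin n → Bool) → G} (hq : q ∈ hkCubes Gf n) :
    q ∘ ψ ∈ hkCubes Gf m := by
  classical
  let h : ((Fin n → Bool) → G) →* ((Fin m → Bool) → G) :=
    { toFun := fun q => q ∘ ψ, map_one' := rfl, map_mul' := fun _ _ => rfl }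
  have hle : hkCubes Gf n ≤ (hkCubes Gf m).comap h := by
    rw [hkCubes, Subgroup.closure_le]
    rintro f ⟨c, F, g, ⟨I, x, hcard, hF⟩, hg, rfl⟩
    have heq : h (faceEl F g) = faceEl {v : Fin m → Bool | ∀ i ∈ I, ψ v i = x i} g := by
      funext v
      simp only [h, MonoidHom.coe_mk, OneHom.coe_mk, Function.comp_apply, faceEl, hF]
      rfl
    have : h (faceEl F g) ∈ hkCubes Gf m := by
      rw [heq]
      refine faceEl_mem_hk hGf ?_ hg
      rcases preimage_constraints hψ I x with hh | ⟨I', x', hc, hEq⟩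
      · exact Or.inl hh
      · exact Or.inr ⟨I', x', by omega, hEq⟩
    exact this
  exact hle hq

end Restr

section RotDel
variable {G : Type*} [Group G] {m n : ℕ}

/-- bottom-face restriction (last coordinate = false) -/
def qbot (q : (Fin (n + 1) → Bool) → G) : (Fin n → Bool) → G :=
  fun v => q (Fin.snoc v false)

/-- difference along the last coordinate -/
def qdel (q : (Fin (n + 1) → Bool) → G) : (Fin n → Bool) → G :=
  fun v => (q (Fin.snoc v false))⁻¹ * q (Fin.snoc v true)

/-- rotation automorphism of the cube -/
def rotc (m : ℕ) (u : Fin (m + 1) → Bool) : Fin (m + 1) → Bool :=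
  Fin.snoc (fun j : Fin m => u j.succ) (!(u 0))

def rinvc (m : ℕ) (u : Fin (m + 1) → Bool) : Fin (m + 1) → Bool :=
  Fin.cons (!(u (Fin.last m))) (fun j : Fin m => u j.castSucc)

lemma rinvc_rotc (u : Fin (m + 1) → Bool) : rinvc m (rotc m u) = u := by
  funext i
  induction i using Fin.cases with
  | zero =>
    simp [rinvc, rotc]
  | succ j =>
    simp [rinvc, rotc]

lemma rotc_rinvc (u : Fin (m + 1) → Bool) : rotc m (rinvc m u) = u := by
  funext i
  induction i using Fin.lastCases with
  | last =>
    simp [rinvc, rotc]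
  | cast j =>
    simp [rinvc, rotc]

lemma snoc_morphism (b : Bool) :
    IsCubeMorphism (fun v : Fin n → Bool => Fin.snoc v b) := by
  refine ⟨{ toFun := fun h => Fin.snoc h 0,
            map_zero' := by funext i; induction i using Fin.lastCases <;> simp,
            map_add' := by
              intro h h'; funext i
              induction i using Fin.lastCases with
              | last => simp
              | cast j => simp },
          Fin.snoc 0 (if b then 1 else 0), fun v => ?_⟩
  funext i
  induction i using Fin.lastCases with
  | last => simp [cubeEmb]
  | cast j => simp [cubeEmb]

lemma rotc_morphism : IsCubeMorphism (rotc m) := by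
  refine ⟨{ toFun := fun h => Fin.snoc (fun j : Fin m => h j.succ) (-(h 0)),
            map_zero' := by funext i; induction i using Fin.lastCases <;> simp,
            map_add' := by
              intro h h'; funext i
              induction i using Fin.lastCases with
              | last => simp; ring
              | cast j => simp },
          Fin.snoc 0 1, fun u => ?_⟩
  funext i
  induction i using Fin.lastCases with
  | last =>
    simp [cubeEmb, rotc]
    cases hu : u 0 <;> simp
  | cast j => simp [cubeEmb, rotc]

lemma rinvc_morphism : IsCubeMorphism (rinvc m) := by
  refine ⟨{ toFun := fun h => Fin.cons (-(h (Fin.last m))) (fun j : Fin m => h j.castSucc),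
            map_zero' := by funext i; induction i using Fin.cases <;> simp,
            map_add' := by
              intro h h'; funext i
              induction i using Fin.cases with
              | zero => simp; ring
              | succ j => simp },
          Fin.cons 1 0, fun u => ?_⟩
  funext i
  induction i using Fin.cases with
  | zero =>
    simp [cubeEmb, rinvc]
    cases hu : u (Fin.last m) <;> simp
  | succ j => simp [cubeEmb, rinvc]

lemma comp_morphism {N : ℕ} {ψ : (Fin n → Bool) → (Fin N → Bool)}
    {φ : (Fin m → Bool) → (Fin n → Bool)} (hψ : IsCubeMorphism ψ) (hφ : IsCubeMorphism φ) :
    IsCubeMorphism (ψ ∘ φ) := by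
  obtain ⟨M₂, t₂, h₂⟩ := hψ
  obtain ⟨M₁, t₁, h₁⟩ := hφ
  refine ⟨M₂.comp M₁, M₂ t₁ + t₂, fun v => ?_⟩
  simp only [Function.comp_apply, h₂, h₁, map_add, AddMonoidHom.comp_apply]
  abel

/-- inserting coordinate `c` in second-to-last position -/
def insc (c : Bool) (u : Fin (m + 1) → Bool) : Fin (m + 2) → Bool :=
  Fin.snoc (Fin.snoc (Fin.init u) c) (u (Fin.last m))

lemma insc_snoc (c b : Bool) (v : Fin m → Bool) :
    insc c (Fin.snoc v b) = Fin.snoc (Fin.snoc v c) b := by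
  simp [insc, Fin.init_snoc]

lemma qdel_comp_snoc (s : (Fin (m + 2) → Bool) → G) (a : Bool) :
    (fun v => qdel s (Fin.snoc v a)) = qdel (s ∘ insc a) := by
  funext v
  simp only [qdel, Function.comp_apply, insc_snoc]

lemma rotc_snoc (c : Bool) (u : Fin (m + 1) → Bool) :
    rotc (m + 1) (Fin.snoc u c) = insc c (rotc m u) := by
  have h1 : (fun j : Fin (m+1) => (Fin.snoc u c : Fin (m+2) → Bool) j.succ) =
      (Fin.snoc (fun j : Fin m => u j.succ) c : Fin (m+1) → Bool) := by
    funext j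
    induction j using Fin.lastCases with
    | last => simp [Fin.succ_last]
    | cast j' => rw [Fin.succ_castSucc, Fin.snoc_castSucc, Fin.snoc_castSucc]
  have h2 : (Fin.snoc u c : Fin (m+2) → Bool) 0 = u 0 := by
    have : (0 : Fin (m+2)) = Fin.castSucc 0 := rfl
    rw [this, Fin.snoc_castSucc]
  rw [rotc, h1, h2, insc, rotc, Fin.init_snoc, Fin.snoc_last]

lemma gray_del (m : ℕ) (s : (Fin (m + 1) → Bool) → G) :
    graySigma m (qdel s) = graySigma (m + 1) (s ∘ rotc m) := by
  induction m with
  | zero =>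
    have h1 : ∀ b, rotc 0 (Fin.snoc (fun i : Fin 0 => i.elim0) b)
        = Fin.snoc (fun i : Fin 0 => i.elim0) (!b) := by
      intro b
      funext j
      have hj : j = Fin.last 0 := Fin.ext (by omega)
      subst hj
      rw [rotc, Fin.snoc_last, Fin.snoc_last]
      show (!((Fin.snoc (fun i : Fin 0 => i.elim0) b : Fin (0+1) → Bool) (Fin.last 0))) = !b
      rw [Fin.snoc_last]
    show qdel s _ = _
    rw [qdel]
    show _ = (graySigma 0 (fun v => (s ∘ rotc 0) (Fin.snoc v true)))⁻¹ *
      graySigma 0 (fun v => (s ∘ rotc 0) (Fin.snoc v false))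
    show _ = ((s ∘ rotc 0) (Fin.snoc (fun i : Fin 0 => i.elim0) true))⁻¹ *
      (s ∘ rotc 0) (Fin.snoc (fun i : Fin 0 => i.elim0) false)
    simp only [Function.comp_apply, h1]
    rfl
  | succ k ih =>
    show (graySigma k (fun v => qdel s (Fin.snoc v true)))⁻¹ *
        graySigma k (fun v => qdel s (Fin.snoc v false)) = _
    rw [qdel_comp_snoc, qdel_comp_snoc, ih, ih]
    show _ = (graySigma (k+1) (fun v => (s ∘ rotc (k+1)) (Fin.snoc v true)))⁻¹ *
      graySigma (k+1) (fun v => (s ∘ rotc (k+1)) (Fin.snoc v false))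
    have hc : ∀ c : Bool, (fun v => (s ∘ rotc (k+1)) (Fin.snoc v c)) = (s ∘ insc c) ∘ rotc k := by
      intro c
      funext v
      simp only [Function.comp_apply, rotc_snoc]
    rw [hc true, hc false]

end RotDel

section Rec
variable {G : Type*} [Group G] {Gf : ℕ → Subgroup G} {n : ℕ}

lemma conj_faceEl_mem (hGf : IsGrpFiltrationHK Gf) {F' : Set (Fin n → Bool)} {c' : ℕ}
    (hface : IsFaceOfCodim F' c') {h : G} (hh : h ∈ Gf c') :
    ∀ a ∈ hkCubes (fun k => Gf (k + 1)) n,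
      (faceEl F' h) * a * (faceEl F' h)⁻¹ ∈ hkCubes (fun k => Gf (k + 1)) n := by
  classical
  intro a ha
  induction ha using Subgroup.closure_induction with
  | one => simpa using one_mem _
  | mul x y hx hy px py =>
    have heq : faceEl F' h * (x * y) * (faceEl F' h)⁻¹ =
        (faceEl F' h * x * (faceEl F' h)⁻¹) * (faceEl F' h * y * (faceEl F' h)⁻¹) := by group
    rw [heq]; exact mul_mem px py
  | inv x hx px =>
    have heq : faceEl F' h * x⁻¹ * (faceEl F' h)⁻¹ =
        (faceEl F' h * x * (faceEl F' h)⁻¹)⁻¹ := by group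
    rw [heq]; exact inv_mem px
  | mem f hf =>
    obtain ⟨c, F, g, ⟨I, x0, hcard, hF⟩, hg, rfl⟩ := hf
    obtain ⟨I', x', hcard', hF'⟩ := hface
    have heq : faceEl F' h * faceEl F g * (faceEl F' h)⁻¹ =
        faceEl F g * faceEl (F ∩ F') (g⁻¹ * h * g * h⁻¹) := by
      funext v
      simp only [faceEl, Pi.mul_apply, Pi.inv_apply]
      by_cases h1 : v ∈ F <;> by_cases h2 : v ∈ F' <;>
        simp [h1, h2, Set.mem_inter_iff] <;> group
    rw [heq]
    refine mul_mem (Subgroup.subset_closure ⟨c, F, g, ⟨I, x0, hcard, hF⟩, hg, rfl⟩) ?_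
    have hcomm : g⁻¹ * h * g * h⁻¹ ∈ Gf (c + c' + 1) := by
      have := hGf.2 (c + 1) c' g hg h⁻¹ (inv_mem hh)
      simp only [inv_inv] at this
      have harith : c + 1 + c' = c + c' + 1 := by omega
      rwa [harith] at this
    refine faceEl_mem_hk (filt_shift hGf) ?_ hcomm
    by_cases hagree : ∀ i ∈ I ∩ I', x0 i = x' i
    · right
      refine ⟨I ∪ I', fun i => if i ∈ I then x0 i else x' i, ?_, ?_⟩
      · calc (I ∪ I').card ≤ I.card + I'.card := Finset.card_union_le _ _
          _ = c + c' := by rw [hcard, hcard']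
      · rw [hF, hF']
        ext v
        simp only [Set.mem_inter_iff, Set.mem_setOf_eq, Finset.mem_union]
        constructor
        · rintro ⟨hI, hI'⟩ i hi
          by_cases hiI : i ∈ I
          · rw [if_pos hiI]; exact hI i hiI
          · rw [if_neg hiI]
            rcases hi with hi | hi
            · exact absurd hi hiI
            · exact hI' i hi
        · intro hy
          constructor
          · intro i hi
            have := hy i (Or.inl hi)
            rwa [if_pos hi] at this
          · intro i hi
            have := hy i (Or.inr hi)
            by_cases hiI : i ∈ I
            · rw [if_pos hiI] at this
              rw [this]
              exact hagree i (Finset.mem_inter.2 ⟨hiI, hi⟩)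
            · rwa [if_neg hiI] at this
    · left
      push_neg at hagree
      obtain ⟨i₀, hi₀, hne⟩ := hagree
      rw [hF, hF']
      apply Set.eq_empty_of_forall_notMem
      rintro v ⟨hv1, hv2⟩
      have e1 := hv1 i₀ (Finset.mem_inter.1 hi₀).1
      have e2 := hv2 i₀ (Finset.mem_inter.1 hi₀).2
      exact hne (by rw [← e1, ← e2])

lemma hk_le_normalizer (hGf : IsGrpFiltrationHK Gf) :
    hkCubes Gf n ≤ Subgroup.normalizer (hkCubes (fun k => Gf (k + 1)) n : Set ((Fin n → Bool) → G)) := by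
  refine (Subgroup.closure_le _).2 ?_
  rintro t ⟨c', F', h, hface, hh, rfl⟩
  rw [SetLike.mem_coe, Subgroup.mem_normalizer_iff]
  intro a
  constructor
  · intro ha; exact conj_faceEl_mem hGf hface hh a ha
  · intro ha
    have h2 := conj_faceEl_mem hGf hface (inv_mem hh) _ ha
    rw [← faceEl_inv] at h2
    have heq : (faceEl F' h)⁻¹ * (faceEl F' h * a * (faceEl F' h)⁻¹) * ((faceEl F' h)⁻¹)⁻¹
        = a := by group
    rwa [heq] at h2

lemma qbot_mem (hGf : IsGrpFiltrationHK Gf) {q : (Fin (n + 1) → Bool) → G}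
    (hq : q ∈ hkCubes Gf (n + 1)) : qbot q ∈ hkCubes Gf n :=
  hk_comp_morphism hGf (snoc_morphism false) hq

lemma qdel_mem (hGf : IsGrpFiltrationHK Gf) {q : (Fin (n + 1) → Bool) → G}
    (hq : q ∈ hkCubes Gf (n + 1)) : qdel q ∈ hkCubes (fun k => Gf (k + 1)) n := by
  classical
  induction hq using Subgroup.closure_induction with
  | one =>
    have : qdel (1 : (Fin (n+1) → Bool) → G) = 1 := by
      funext v; simp [qdel]
    rw [this]; exact one_mem _
  | mul x y hx hy px py =>
    have heq : qdel (x * y) = ((qbot y)⁻¹ * qdel x * ((qbot y)⁻¹)⁻¹) * qdel y := by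
      funext v
      simp only [qdel, qbot, Pi.mul_apply, Pi.inv_apply, inv_inv]
      group
    rw [heq]
    refine mul_mem ?_ py
    have hnorm := hk_le_normalizer hGf (inv_mem (qbot_mem hGf hy))
    exact (Subgroup.mem_normalizer_iff.1 hnorm (qdel x)).1 px
  | inv x hx px =>
    have heq : qdel x⁻¹ = (qbot x) * (qdel x)⁻¹ * (qbot x)⁻¹ := by
      funext v
      simp only [qdel, qbot, Pi.mul_apply, Pi.inv_apply]
      group
    rw [heq]
    have hnorm := hk_le_normalizer hGf (qbot_mem hGf hx)
    exact (Subgroup.mem_normalizer_iff.1 hnorm (qdel x)⁻¹).1 (inv_mem px)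
  | mem f hf =>
    obtain ⟨c, F, g, ⟨I, x, hcard, hF⟩, hg, rfl⟩ := hf
    by_cases hlast : Fin.last n ∈ I
    · -- the face constrains the last coordinate
      have hc1 : 1 ≤ c := by
        rw [← hcard]
        exact Finset.card_pos.2 ⟨_, hlast⟩
      have hker : ∀ (v : Fin n → Bool) (b : Bool), b ≠ x (Fin.last n) →
          Fin.snoc v b ∉ F := by
        intro v b hb hmem
        rw [hF] at hmem
        have := hmem (Fin.last n) hlast
        rw [Fin.snoc_last] at this
        exact hb this
      have hmem_iff : ∀ v : Fin n → Bool, (Fin.snoc v (x (Fin.last n)) ∈ F) ↔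
          (∀ i ∈ I.erase (Fin.last n),
            (Fin.snoc v (x (Fin.last n)) : Fin (n+1) → Bool) i = x i) := by
        intro v
        rw [hF]
        constructor
        · intro hm i hi
          exact hm i (Finset.erase_subset _ _ hi)
        · intro hm i hi
          by_cases hil : i = Fin.last n
          · subst hil; rw [Fin.snoc_last]
          · exact hm i (Finset.mem_erase.2 ⟨hil, hi⟩)
      have hR := preimage_constraints (m := n) (snoc_morphism (x (Fin.last n)))
        (I.erase (Fin.last n)) x
      have hcarde : (I.erase (Fin.last n)).card = c - 1 := by
        rw [Finset.card_erase_of_mem hlast, hcard]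
      have hgmem : g ∈ (fun k => Gf (k + 1)) (c - 1) := by
        show g ∈ Gf (c - 1 + 1)
        have : c - 1 + 1 = c := by omega
        rwa [this]
      have hS : {v : Fin n → Bool | ∀ i ∈ I.erase (Fin.last n),
            (Fin.snoc v (x (Fin.last n)) : Fin (n+1) → Bool) i = x i} = ∅ ∨
          ∃ (I' : Finset (Fin n)) (x' : Fin n → Bool), I'.card ≤ c - 1 ∧
            {v : Fin n → Bool | ∀ i ∈ I.erase (Fin.last n),
              (Fin.snoc v (x (Fin.last n)) : Fin (n+1) → Bool) i = x i} =
            {v : Fin n → Bool | ∀ j ∈ I', v j = x' j} := by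
        rcases hR with hR | ⟨I', x', hcr, hEq⟩
        · exact Or.inl hR
        · exact Or.inr ⟨I', x', by omega, hEq⟩
      cases hb0 : x (Fin.last n) with
      | false =>
        have heq : qdel (faceEl F g) =
            faceEl {v : Fin n → Bool | ∀ i ∈ I.erase (Fin.last n),
              (Fin.snoc v (x (Fin.last n)) : Fin (n+1) → Bool) i = x i} g⁻¹ := by
          funext v
          simp only [qdel, faceEl]
          rw [if_neg (hker v true (by rw [hb0]; simp))]
          have hcond : (Fin.snoc v false ∈ F) ↔ (v ∈ {w : Fin n → Bool | ∀ i ∈ I.erase (Fin.last n),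
              (Fin.snoc w (x (Fin.last n)) : Fin (n+1) → Bool) i = x i}) := by
            conv_lhs => rw [show (false : Bool) = x (Fin.last n) from hb0.symm]
            exact hmem_iff v
          by_cases hv : Fin.snoc v false ∈ F
          · rw [if_pos hv, if_pos (hcond.1 hv)]
            simp
          · rw [if_neg hv, if_neg (fun hm => hv (hcond.2 hm))]
            simp
        rw [heq]
        exact faceEl_mem_hk (filt_shift hGf) hS (inv_mem hgmem)
      | true =>
        have heq : qdel (faceEl F g) =
            faceEl {v : Fin n → Bool | ∀ i ∈ I.erase (Fin.last n),
              (Fin.snoc v (x (Fin.last n)) : Fin (n+1) → Bool) i = x i} g := by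
          funext v
          simp only [qdel, faceEl]
          rw [if_neg (hker v false (by rw [hb0]; simp))]
          have hcond : (Fin.snoc v true ∈ F) ↔ (v ∈ {w : Fin n → Bool | ∀ i ∈ I.erase (Fin.last n),
              (Fin.snoc w (x (Fin.last n)) : Fin (n+1) → Bool) i = x i}) := by
            conv_lhs => rw [show (true : Bool) = x (Fin.last n) from hb0.symm]
            exact hmem_iff v
          by_cases hv : Fin.snoc v true ∈ F
          · rw [if_pos hv, if_pos (hcond.1 hv)]
            simp
          · rw [if_neg hv, if_neg (fun hm => hv (hcond.2 hm))]
            simp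
        rw [heq]
        exact faceEl_mem_hk (filt_shift hGf) hS hgmem
    · -- last coordinate free: the difference is trivial
      have heq : qdel (faceEl F g) = 1 := by
        funext v
        simp only [qdel, faceEl, hF]
        have hiff : (Fin.snoc v false ∈ {w : Fin (n+1) → Bool | ∀ i ∈ I, w i = x i}) ↔
            (Fin.snoc v true ∈ {w : Fin (n+1) → Bool | ∀ i ∈ I, w i = x i}) := by
          simp only [Set.mem_setOf_eq]
          constructor <;> intro hcnd i hi <;>
          · have hne : i ≠ Fin.last n := by rintro rfl; exact hlast hi
            obtain ⟨j, rfl⟩ := Fin.exists_castSucc_eq.mpr hne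
            have := hcnd _ hi
            rw [Fin.snoc_castSucc] at this ⊢
            exact this
        by_cases h1 : Fin.snoc v false ∈ {w : Fin (n+1) → Bool | ∀ i ∈ I, w i = x i}
        · rw [if_pos h1, if_pos (hiff.1 h1)]; simp
        · rw [if_neg h1, if_neg (fun h2 => h1 (hiff.2 h2))]; simp
      rw [heq]
      exact one_mem _

lemma hk_succ_of (hGf : IsGrpFiltrationHK Gf) {q : (Fin (n + 1) → Bool) → G}
    (hb : qbot q ∈ hkCubes Gf n) (hd : qdel q ∈ hkCubes (fun k => Gf (k + 1)) n) :
    q ∈ hkCubes Gf (n + 1) := by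
  classical
  let emb : Fin n ↪ Fin (n + 1) := ⟨Fin.castSucc, Fin.castSucc_injective n⟩
  let ext0 : ((Fin n → Bool) → G) →* ((Fin (n + 1) → Bool) → G) :=
    { toFun := fun r u => r (Fin.init u), map_one' := rfl, map_mul' := fun _ _ => rfl }
  let ext1 : ((Fin n → Bool) → G) →* ((Fin (n + 1) → Bool) → G) :=
    { toFun := fun r u => if u (Fin.last n) then r (Fin.init u) else 1,
      map_one' := by funext u; simp,
      map_mul' := by
        intro r r'; funext u
        by_cases h : u (Fin.last n) <;> simp [h] }
  have h0 : ∀ r ∈ hkCubes Gf n, ext0 r ∈ hkCubes Gf (n + 1) := by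
    intro r hr
    have hle : hkCubes Gf n ≤ (hkCubes Gf (n + 1)).comap ext0 := by
      refine (Subgroup.closure_le _).2 ?_
      rintro f ⟨c, F, g, ⟨I, x, hcard, hF⟩, hg, rfl⟩
      show ext0 (faceEl F g) ∈ hkCubes Gf (n + 1)
      have heq : ext0 (faceEl F g) =
          faceEl {u : Fin (n+1) → Bool | ∀ i ∈ I.map emb, u i = (Fin.snoc x false : Fin (n+1) → Bool) i} g := by
        funext u
        simp only [ext0, MonoidHom.coe_mk, OneHom.coe_mk, faceEl, hF]
        congr 1
        simp only [Set.mem_setOf_eq, eq_iff_iff]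
        constructor
        · intro hm i hi
          obtain ⟨i₀, hi₀, rfl⟩ := Finset.mem_map.1 hi
          show u i₀.castSucc = (Fin.snoc x false : Fin (n+1) → Bool) i₀.castSucc
          rw [Fin.snoc_castSucc]
          exact hm i₀ hi₀
        · intro hm i hi
          have := hm (emb i) (Finset.mem_map_of_mem _ hi)
          show u i.castSucc = x i
          rw [show ((emb i : Fin (n+1))) = i.castSucc from rfl] at this
          rwa [Fin.snoc_castSucc] at this
      rw [heq]
      refine faceEl_mem_hk hGf (Or.inr ⟨I.map emb, Fin.snoc x false, ?_, rfl⟩) hg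
      rw [Finset.card_map, hcard]
    exact hle hr
  have h1 : ∀ r ∈ hkCubes (fun k => Gf (k + 1)) n, ext1 r ∈ hkCubes Gf (n + 1) := by
    intro r hr
    have hle : hkCubes (fun k => Gf (k + 1)) n ≤ (hkCubes Gf (n + 1)).comap ext1 := by
      refine (Subgroup.closure_le _).2 ?_
      rintro f ⟨c, F, g, ⟨I, x, hcard, hF⟩, hg, rfl⟩
      show ext1 (faceEl F g) ∈ hkCubes Gf (n + 1)
      have heq : ext1 (faceEl F g) =
          faceEl {u : Fin (n+1) → Bool |
            ∀ i ∈ insert (Fin.last n) (I.map emb), u i = (Fin.snoc x true : Fin (n+1) → Bool) i} g := by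
        funext u
        simp only [ext1, MonoidHom.coe_mk, OneHom.coe_mk, faceEl, hF]
        by_cases hu : u (Fin.last n)
        · rw [if_pos hu]
          congr 1
          simp only [Set.mem_setOf_eq, eq_iff_iff]
          constructor
          · intro hm i hi
            rcases Finset.mem_insert.1 hi with rfl | hi
            · rw [Fin.snoc_last, hu]
            · obtain ⟨i₀, hi₀, rfl⟩ := Finset.mem_map.1 hi
              show u i₀.castSucc = (Fin.snoc x true : Fin (n+1) → Bool) i₀.castSucc
              rw [Fin.snoc_castSucc]
              exact hm i₀ hi₀
          · intro hm i hi
            have := hm (emb i) (Finset.mem_insert_of_mem (Finset.mem_map_of_mem _ hi))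
            show u i.castSucc = x i
            rw [show ((emb i : Fin (n+1))) = i.castSucc from rfl] at this
            rwa [Fin.snoc_castSucc] at this
        · rw [if_neg hu, if_neg]
          intro hm
          have := hm (Fin.last n) (Finset.mem_insert_self _ _)
          rw [Fin.snoc_last] at this
          exact hu (by rw [this])
      rw [heq]
      refine faceEl_mem_hk hGf
        (Or.inr ⟨insert (Fin.last n) (I.map emb), Fin.snoc x true, ?_, rfl⟩) hg
      have hnotin : Fin.last n ∉ I.map emb := by
        intro hmem
        obtain ⟨i₀, _, he⟩ := Finset.mem_map.1 hmem
        exact absurd he (Fin.castSucc_lt_last i₀).ne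
      rw [Finset.card_insert_of_notMem hnotin, Finset.card_map, hcard]
    exact hle hr
  have hqeq : q = ext0 (qbot q) * ext1 (qdel q) := by
    funext u
    have hu := Fin.snoc_init_self u
    simp only [ext0, ext1, MonoidHom.coe_mk, OneHom.coe_mk, Pi.mul_apply, qbot, qdel]
    by_cases h : u (Fin.last n)
    · rw [if_pos h]
      rw [h] at hu
      rw [hu]
      group
    · rw [if_neg h, mul_one]
      have hf : u (Fin.last n) = false := by simpa using h
      rw [hf] at hu
      rw [hu]
  rw [hqeq]
  exact mul_mem (h0 _ hb) (h1 _ hd)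

end Rec

section Sigma
variable {G : Type*} [Group G]

lemma sigma_hk (m : ℕ) : ∀ (Gf : ℕ → Subgroup G), IsGrpFiltrationHK Gf →
    ∀ q ∈ hkCubes Gf m, graySigma m q ∈ Gf m := by
  induction m with
  | zero =>
    intro Gf hGf q hq
    let ev : ((Fin 0 → Bool) → G) →* G := Pi.evalMonoidHom (fun _ => G) (fun i => i.elim0)
    have hle : hkCubes Gf 0 ≤ (Gf 0).comap ev := by
      refine (Subgroup.closure_le _).2 ?_
      rintro f ⟨c, F, g, ⟨I, x, hcard, hF⟩, hg, rfl⟩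
      have hI : I = ∅ := Finset.eq_empty_of_isEmpty I
      have hc : c = 0 := by rw [← hcard, hI]; rfl
      show ev (faceEl F g) ∈ Gf 0
      have hmem : (fun i : Fin 0 => i.elim0) ∈ F := by
        rw [hF]; intro i _; exact i.elim0
      have hev : ev (faceEl F g) = g := by
        show faceEl F g (fun i => i.elim0) = g
        unfold faceEl
        rw [if_pos hmem]
      rw [hev]
      rw [hc] at hg
      exact hg
    exact hle hq
  | succ k ih =>
    intro Gf hGf q hq
    have h1 : q ∘ rinvc k ∈ hkCubes Gf (k + 1) := hk_comp_morphism hGf rinvc_morphism hq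
    have h2 : qdel (q ∘ rinvc k) ∈ hkCubes (fun j => Gf (j + 1)) k := qdel_mem hGf h1
    have h3 := ih (fun j => Gf (j + 1)) (filt_shift hGf) _ h2
    rw [gray_del] at h3
    have hcomp : (q ∘ rinvc k) ∘ rotc k = q := by
      funext u
      simp only [Function.comp_apply]
      rw [rinvc_rotc]
    rwa [hcomp] at h3

lemma inj_le {m n : ℕ} {φ : (Fin m → Bool) → (Fin n → Bool)}
    (hinj : Function.Injective φ) : m ≤ n := by
  have := Fintype.card_le_of_injective φ hinj
  simp only [Fintype.card_fun, Fintype.card_bool, Fintype.card_fin] at this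
  exact (Nat.pow_le_pow_iff_right (by norm_num)).1 this

lemma snoc_addZ {n : ℕ} (p p' : Fin n → ℤ) (x x' : ℤ) :
    (Fin.snoc (p + p') (x + x') : Fin (n+1) → ℤ) =
      (Fin.snoc p x : Fin (n+1) → ℤ) + (Fin.snoc p' x' : Fin (n+1) → ℤ) := by
  funext i
  induction i using Fin.lastCases with
  | last => simp
  | cast j => simp

lemma snoc_zeroZ {n : ℕ} : (Fin.snoc (0 : Fin n → ℤ) (0 : ℤ) : Fin (n+1) → ℤ) = 0 := by
  funext i
  induction i using Fin.lastCases with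
  | last => simp
  | cast j => simp

lemma phiplus_morphism {m n : ℕ} {φ : (Fin m → Bool) → (Fin n → Bool)}
    (hφ : IsCubeMorphism φ) :
    IsCubeMorphism (fun u : Fin (m+1) → Bool =>
      (Fin.snoc (φ (Fin.init u)) (u (Fin.last m)) : Fin (n+1) → Bool)) := by
  obtain ⟨M, t, hM⟩ := hφ
  refine ⟨{ toFun := fun h => (Fin.snoc (M (fun j => h j.castSucc)) (h (Fin.last m)) :
              Fin (n+1) → ℤ),
            map_zero' := by
              have h2 : (fun j : Fin m => (0 : Fin (m+1) → ℤ) j.castSucc) =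
                  (0 : Fin m → ℤ) := rfl
              have h3 : (0 : Fin (m+1) → ℤ) (Fin.last m) = (0 : ℤ) := rfl
              rw [h2, h3, map_zero, snoc_zeroZ]
            map_add' := by
              intro h h'
              have h2 : (fun j : Fin m => (h + h') j.castSucc) =
                  (fun j : Fin m => h j.castSucc) + (fun j : Fin m => h' j.castSucc) := rfl
              have h3 : (h + h') (Fin.last m) = h (Fin.last m) + h' (Fin.last m) := rfl
              rw [h2, h3, map_add, snoc_addZ] },
          Fin.snoc t 0, fun u => ?_⟩
  funext i
  induction i using Fin.lastCases with
  | last => simp [cubeEmb]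
  | cast j =>
    have h1 : cubeEmb ((Fin.snoc (φ (Fin.init u)) (u (Fin.last m)) : Fin (n+1) → Bool)) j.castSucc
        = cubeEmb (φ (Fin.init u)) j := by
      simp [cubeEmb]
    have h2 : (fun j' : Fin m => cubeEmb u j'.castSucc) = cubeEmb (Fin.init u) := rfl
    rw [h1, hM]
    simp only [AddMonoidHom.coe_mk, ZeroHom.coe_mk, Pi.add_apply, Fin.snoc_castSucc, h2]

end Sigma

section Main
variable {G : Type*} [Group G]

lemma faceMap_snocFalse {m n : ℕ} {φ : (Fin m → Bool) → (Fin n → Bool)}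
    (hφ : IsFaceMap φ) :
    IsFaceMap (fun v : Fin m → Bool => (Fin.snoc (φ v) false : Fin (n+1) → Bool)) := by
  classical
  obtain ⟨hmor, hinj, I, x, hcard, hF⟩ := hφ
  have hmn : m ≤ n := inj_le hinj
  let emb : Fin n ↪ Fin (n + 1) := ⟨Fin.castSucc, Fin.castSucc_injective n⟩
  refine ⟨comp_morphism (snoc_morphism false) hmor, ?_, ?_⟩
  · intro v w hvw
    apply hinj
    have := congrArg Fin.init hvw
    rwa [Fin.init_snoc, Fin.init_snoc] at this
  · refine ⟨insert (Fin.last n) (I.map emb), Fin.snoc x false, ?_, ?_⟩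
    · have hnotin : Fin.last n ∉ I.map emb := by
        intro hmem
        obtain ⟨i₀, _, he⟩ := Finset.mem_map.1 hmem
        exact absurd he (Fin.castSucc_lt_last i₀).ne
      rw [Finset.card_insert_of_notMem hnotin, Finset.card_map, hcard]
      omega
    · ext u
      constructor
      · rintro ⟨v, rfl⟩ i hi
        rcases Finset.mem_insert.1 hi with rfl | hi
        · show (Fin.snoc (φ v) false : Fin (n+1) → Bool) (Fin.last n) =
            (Fin.snoc x false : Fin (n+1) → Bool) (Fin.last n)
          rw [Fin.snoc_last, Fin.snoc_last]
        · obtain ⟨i₀, hi₀, rfl⟩ := Finset.mem_map.1 hi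
          show (Fin.snoc (φ v) false : Fin (n+1) → Bool) i₀.castSucc =
            (Fin.snoc x false : Fin (n+1) → Bool) i₀.castSucc
          rw [Fin.snoc_castSucc, Fin.snoc_castSucc]
          have hv : φ v ∈ Set.range φ := Set.mem_range_self v
          rw [hF] at hv
          exact hv i₀ hi₀
      · intro hu
        have hul : u (Fin.last n) = false := by
          have := hu (Fin.last n) (Finset.mem_insert_self _ _)
          rwa [Fin.snoc_last] at this
        have hinit : Fin.init u ∈ Set.range φ := by
          rw [hF]
          intro i hi
          have := hu (emb i) (Finset.mem_insert_of_mem (Finset.mem_map_of_mem _ hi))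
          show u i.castSucc = x i
          rw [show ((emb i : Fin (n+1))) = i.castSucc from rfl] at this
          rwa [Fin.snoc_castSucc] at this
        obtain ⟨v, hv⟩ := hinit
        refine ⟨v, ?_⟩
        show (Fin.snoc (φ v) false : Fin (n+1) → Bool) = u
        rw [hv, ← hul, Fin.snoc_init_self]

lemma faceMap_plus_rot {m n : ℕ} {φ : (Fin m → Bool) → (Fin n → Bool)}
    (hφ : IsFaceMap φ) :
    IsFaceMap ((fun u : Fin (m+1) → Bool =>
      (Fin.snoc (φ (Fin.init u)) (u (Fin.last m)) : Fin (n+1) → Bool)) ∘ rotc m) := by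
  classical
  obtain ⟨hmor, hinj, I, x, hcard, hF⟩ := hφ
  have hmn : m ≤ n := inj_le hinj
  let emb : Fin n ↪ Fin (n + 1) := ⟨Fin.castSucc, Fin.castSucc_injective n⟩
  set Φ : (Fin (m+1) → Bool) → (Fin (n+1) → Bool) :=
    fun u => (Fin.snoc (φ (Fin.init u)) (u (Fin.last m)) : Fin (n+1) → Bool) with hΦ
  have hΦinj : Function.Injective Φ := by
    intro u w huw
    have h1 := congrArg (fun z => z (Fin.last n)) huw
    simp only [hΦ, Fin.snoc_last] at h1
    have h2 := congrArg Fin.init huw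
    simp only [hΦ, Fin.init_snoc] at h2
    have h3 := hinj h2
    have hu := Fin.snoc_init_self u
    have hw := Fin.snoc_init_self w
    rw [← hu, ← hw, h3, h1]
  have hrotinj : Function.Injective (rotc m) :=
    Function.LeftInverse.injective (g := rinvc m) rinvc_rotc
  refine ⟨comp_morphism (phiplus_morphism hmor) rotc_morphism, hΦinj.comp hrotinj, ?_⟩
  have hrange : Set.range (Φ ∘ rotc m) = Set.range Φ := by
    rw [Set.range_comp]
    have : Set.range (rotc m) = Set.univ :=
      Set.range_eq_univ.2 (fun u => ⟨rinvc m u, rotc_rinvc u⟩)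
    rw [this, Set.image_univ]
  rw [hrange]
  refine ⟨I.map emb, Fin.snoc x false, ?_, ?_⟩
  · rw [Finset.card_map, hcard]
    omega
  · ext u
    constructor
    · rintro ⟨w, rfl⟩ i hi
      obtain ⟨i₀, hi₀, rfl⟩ := Finset.mem_map.1 hi
      show Φ w i₀.castSucc = (Fin.snoc x false : Fin (n+1) → Bool) i₀.castSucc
      simp only [hΦ]
      rw [Fin.snoc_castSucc, Fin.snoc_castSucc]
      have hv : φ (Fin.init w) ∈ Set.range φ := Set.mem_range_self _
      rw [hF] at hv
      exact hv i₀ hi₀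
    · intro hu
      have hinit : Fin.init u ∈ Set.range φ := by
        rw [hF]
        intro i hi
        have := hu (emb i) (Finset.mem_map_of_mem _ hi)
        show u i.castSucc = x i
        rw [show ((emb i : Fin (n+1))) = i.castSucc from rfl] at this
        rwa [Fin.snoc_castSucc] at this
      obtain ⟨v, hv⟩ := hinit
      refine ⟨Fin.snoc v (u (Fin.last n)), ?_⟩
      simp only [hΦ, Fin.init_snoc, Fin.snoc_last]
      rw [hv, Fin.snoc_init_self]

theorem P_to_hk : ∀ (n : ℕ) (Gf : ℕ → Subgroup G), IsGrpFiltrationHK Gf →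
    ∀ q : (Fin n → Bool) → G,
    (∀ (m : ℕ) (φ : (Fin m → Bool) → (Fin n → Bool)), IsFaceMap φ →
      graySigma m (q ∘ φ) ∈ Gf m) → q ∈ hkCubes Gf n := by
  intro n
  induction n with
  | zero =>
    intro Gf hGf q hP
    have hid : IsFaceMap (id : (Fin 0 → Bool) → (Fin 0 → Bool)) := by
      refine ⟨⟨AddMonoidHom.id _, 0, fun v => by funext i; exact i.elim0⟩, Function.injective_id,
        ∅, fun _ => false, rfl, ?_⟩
      rw [Set.range_id]
      ext v; simp
    have h := hP 0 id hid
    rw [Function.comp_id] at h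
    have hq : q = faceEl {v : Fin 0 → Bool | ∀ i ∈ (∅ : Finset (Fin 0)), v i = false}
        (q (fun i => i.elim0)) := by
      funext v
      rw [faceEl, if_pos (by intro i _; exact i.elim0)]
      exact congrArg q (Subsingleton.elim v _)
    rw [hq]
    exact Subgroup.subset_closure
      ⟨0, _, q (fun i => i.elim0), ⟨∅, fun _ => false, rfl, rfl⟩, h, rfl⟩
  | succ n ih =>
    intro Gf hGf q hP
    have hbot : qbot q ∈ hkCubes Gf n := by
      apply ih Gf hGf
      intro m φ hφ
      have h := hP m _ (faceMap_snocFalse hφ)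
      have heq : q ∘ (fun v : Fin m → Bool => (Fin.snoc (φ v) false : Fin (n+1) → Bool)) =
          qbot q ∘ φ := rfl
      rwa [heq] at h
    have hdel : qdel q ∈ hkCubes (fun k => Gf (k + 1)) n := by
      apply ih (fun k => Gf (k + 1)) (filt_shift hGf)
      intro m φ hφ
      have h := hP (m + 1) _ (faceMap_plus_rot hφ)
      set Φ : (Fin (m+1) → Bool) → (Fin (n+1) → Bool) :=
        fun u => (Fin.snoc (φ (Fin.init u)) (u (Fin.last m)) : Fin (n+1) → Bool) with hΦ
      have hassoc : q ∘ (Φ ∘ rotc m) = (q ∘ Φ) ∘ rotc m := rfl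
      rw [hassoc, ← gray_del] at h
      have heq : qdel (q ∘ Φ) = (qdel q) ∘ φ := by
        funext v
        simp only [qdel, Function.comp_apply, hΦ, Fin.init_snoc, Fin.snoc_last]
      rwa [heq] at h
    exact hk_succ_of hGf hbot hdel

end Main

theorem stmt11 {G : Type*} [Group G] (Gf : ℕ → Subgroup G) (hGf : IsGrpFiltrationHK Gf)
    {n : ℕ} (q : (Fin n → Bool) → G) :
    q ∈ hkCubes Gf n ↔
      ∀ (m : ℕ) (φ : (Fin m → Bool) → (Fin n → Bool)), IsFaceMap φ →
        graySigma m (q ∘ φ) ∈ Gf m := by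
  constructor
  · intro hq m φ hφ
    exact sigma_hk m Gf hGf _ (hk_comp_morphism hGf hφ.1 hq)
  · intro h
    exact P_to_hk n Gf hGf q h
end

section
/- Let (G, G_•) be a filtered group of degree k and Γ ≤ G a subgroup, with π_Γ: G → G/Γ the canonical projection to left cosets. Then the coset space X = G/Γ with cube sets C^n(X) = {π_Γ ∘ q : q ∈ C^n(G_•)} is a k-step nilspace. -/
open Finset

/-- A (pre)filtration on a group: a decreasing chain of subgroups with
`[G_i, G_j] ⊆ G_{i+j}`. -/
def IsGroupFiltration {G : Type*} [Group G] (Gf : ℕ → Subgroup G) : Prop :=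
  (∀ i, Gf (i + 1) ≤ Gf i) ∧
  (∀ i j : ℕ, ∀ x ∈ Gf i, ∀ y ∈ Gf j, x⁻¹ * y⁻¹ * x * y ∈ Gf (i + j))

namespace NS13

open Finset

variable {G : Type*} [Group G]

/-- Pointwise Boolean order on the cube. -/
def cle {n : ℕ} (u v : Fin n → Bool) : Prop := ∀ i, u i = true → v i = true

instance {n : ℕ} (u v : Fin n → Bool) : Decidable (cle u v) := by
  unfold cle; infer_instance

def upSet {n : ℕ} (v : Fin n → Bool) : Set (Fin n → Bool) := {w | cle v w}

def cjoin {n : ℕ} (u v : Fin n → Bool) : Fin n → Bool := fun i => u i || v i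

def topv (n : ℕ) : Fin n → Bool := fun _ => true
def botv (n : ℕ) : Fin n → Bool := fun _ => false

lemma cle_refl {n : ℕ} (v : Fin n → Bool) : cle v v := fun _ h => h

lemma cle_trans {n : ℕ} {u v w : Fin n → Bool} (h1 : cle u v) (h2 : cle v w) : cle u w :=
  fun i hi => h2 i (h1 i hi)

lemma weight_le_of_cle {n : ℕ} {u v : Fin n → Bool} (h : cle u v) : weight u ≤ weight v := by
  apply Finset.card_le_card
  intro i hi
  simp only [Finset.mem_filter, Finset.mem_univ, true_and] at *
  exact h i hi

lemma eq_of_cle_of_weight_le {n : ℕ} {u v : Fin n → Bool} (h : cle u v)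
    (hw : weight v ≤ weight u) : u = v := by
  have hsub : (Finset.univ.filter fun i => u i = true) ⊆ (Finset.univ.filter fun i => v i = true) := by
    intro i hi
    simp only [Finset.mem_filter, Finset.mem_univ, true_and] at *
    exact h i hi
  have := Finset.eq_of_subset_of_card_le hsub hw
  funext i
  have hiu : i ∈ (Finset.univ.filter fun i => u i = true) ↔ i ∈ (Finset.univ.filter fun i => v i = true) := by
    rw [this]
  simp only [Finset.mem_filter, Finset.mem_univ, true_and] at hiu
  cases hu : u i <;> cases hv : v i <;> simp_all

lemma weight_lt_of_cle_ne {n : ℕ} {u v : Fin n → Bool} (h : cle u v) (hne : u ≠ v) :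
    weight u < weight v := by
  rcases lt_or_ge (weight u) (weight v) with h' | h'
  · exact h'
  · exact absurd (eq_of_cle_of_weight_le h h') hne

lemma cle_top {n : ℕ} (v : Fin n → Bool) : cle v (topv n) := fun _ _ => rfl

lemma eq_top_of_top_cle {n : ℕ} {v : Fin n → Bool} (h : cle (topv n) v) : v = topv n := by
  funext i; exact h i rfl

lemma weight_topv (n : ℕ) : weight (topv n) = n := by
  simp [weight, topv]

lemma eq_botv_of_weight_eq_zero {n : ℕ} {v : Fin n → Bool} (h : weight v = 0) : v = botv n := by
  rw [weight, Finset.card_eq_zero] at h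
  funext i
  cases hv : v i
  · rfl
  · exfalso
    have hmem : i ∈ (Finset.univ.filter fun i => v i = true) := by simp [hv]
    rw [h] at hmem
    exact absurd hmem (Finset.notMem_empty i)

lemma cle_cjoin_left {n : ℕ} (u v : Fin n → Bool) : cle u (cjoin u v) := by
  intro i h; simp [cjoin, h]

lemma cle_cjoin_right {n : ℕ} (u v : Fin n → Bool) : cle v (cjoin u v) := by
  intro i h; simp [cjoin, h]

lemma cle_cjoin_iff {n : ℕ} {u v w : Fin n → Bool} :
    cle (cjoin u v) w ↔ cle u w ∧ cle v w := by
  constructor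
  · intro h
    exact ⟨cle_trans (cle_cjoin_left u v) h, cle_trans (cle_cjoin_right u v) h⟩
  · rintro ⟨h1, h2⟩ i hi
    simp only [cjoin, Bool.or_eq_true] at hi
    rcases hi with hi | hi
    · exact h1 i hi
    · exact h2 i hi

lemma weight_cjoin_le {n : ℕ} (u v : Fin n → Bool) :
    weight (cjoin u v) ≤ weight u + weight v := by
  have : (Finset.univ.filter fun i => cjoin u v i = true) ⊆
      (Finset.univ.filter fun i => u i = true) ∪ (Finset.univ.filter fun i => v i = true) := by
    intro i hi
    simp only [Finset.mem_filter, Finset.mem_univ, true_and, Finset.mem_union, cjoin,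
      Bool.or_eq_true] at *
    exact hi
  calc weight (cjoin u v) ≤ _ := Finset.card_le_card this
  _ ≤ _ := Finset.card_union_le _ _

lemma cjoin_botv {n : ℕ} (u : Fin n → Bool) : cjoin u (botv n) = u := by
  funext i; simp [cjoin, botv]

lemma exists_false_of_ne_top {n : ℕ} {v : Fin n → Bool} (h : v ≠ topv n) :
    ∃ j, v j = false := by
  by_contra hc
  push_neg at hc
  apply h
  funext i
  cases hv : v i
  · exact absurd hv (hc i)
  · rfl

lemma ne_top_of_cle_ne_top {n : ℕ} {u v : Fin n → Bool} (h : cle u v) (hv : v ≠ topv n) :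
    u ≠ topv n := by
  rintro rfl
  exact hv (eq_top_of_top_cle h)

lemma isFace_upSet {n : ℕ} (v : Fin n → Bool) : IsFaceOfCodim (upSet v) (weight v) := by
  refine ⟨Finset.univ.filter fun i => v i = true, topv n, rfl, ?_⟩
  ext w
  simp only [upSet, Set.mem_setOf_eq, cle, Finset.mem_filter, Finset.mem_univ, true_and, topv]

/-! faceEl algebra -/

lemma faceEl_apply_mem {n : ℕ} {F : Set (Fin n → Bool)} {v} (h : v ∈ F) (g : G) :
    faceEl F g v = g := by simp [faceEl, h]

lemma faceEl_apply_not_mem {n : ℕ} {F : Set (Fin n → Bool)} {v} (h : v ∉ F) (g : G) :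
    faceEl F g v = 1 := by simp [faceEl, h]

lemma faceEl_mul {n : ℕ} (F : Set (Fin n → Bool)) (a b : G) :
    faceEl F a * faceEl F b = faceEl F (a * b) := by
  funext v
  by_cases h : v ∈ F <;> simp [faceEl, h, Pi.mul_apply]

lemma faceEl_one {n : ℕ} (F : Set (Fin n → Bool)) : faceEl F (1 : G) = 1 := by
  funext v; by_cases h : v ∈ F <;> simp [faceEl, h]

lemma faceEl_inv {n : ℕ} (F : Set (Fin n → Bool)) (a : G) :
    (faceEl F a)⁻¹ = faceEl F a⁻¹ := by
  funext v; by_cases h : v ∈ F <;> simp [faceEl, h, Pi.inv_apply]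

lemma faceEl_empty {n : ℕ} (a : G) : faceEl (∅ : Set (Fin n → Bool)) a = 1 := by
  funext v; simp [faceEl]

lemma faceEl_comp {m n : ℕ} (F : Set (Fin n → Bool)) (a : G)
    (φ : (Fin m → Bool) → (Fin n → Bool)) :
    faceEl F a ∘ φ = faceEl (φ ⁻¹' F) a := by
  funext v
  by_cases h : φ v ∈ F <;> simp [faceEl, h, Function.comp]

lemma upSet_apply_mem {n : ℕ} {u p : Fin n → Bool} (h : cle u p) (a : G) :
    faceEl (upSet u) a p = a := if_pos h

lemma upSet_apply_not_mem {n : ℕ} {u p : Fin n → Bool} (h : ¬ cle u p) (a : G) :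
    faceEl (upSet u) a p = 1 := if_neg h

lemma faceEl_swap {n : ℕ} (u w : Fin n → Bool) (a b : G) :
    faceEl (upSet u) a * faceEl (upSet w) b =
      faceEl (upSet w) b * (faceEl (upSet u) a *
        faceEl (upSet (cjoin u w)) (a⁻¹ * b⁻¹ * a * b)) := by
  funext p
  simp only [Pi.mul_apply]
  by_cases hu : cle u p <;> by_cases hw : cle w p
  · have hj : cle (cjoin u w) p := cle_cjoin_iff.mpr ⟨hu, hw⟩
    rw [upSet_apply_mem hu, upSet_apply_mem hw, upSet_apply_mem hj]
    group
  · have hj : ¬ cle (cjoin u w) p := fun h => hw (cle_cjoin_iff.mp h).2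
    rw [upSet_apply_mem hu, upSet_apply_not_mem hw, upSet_apply_not_mem hj]
    group
  · have hj : ¬ cle (cjoin u w) p := fun h => hu (cle_cjoin_iff.mp h).1
    rw [upSet_apply_not_mem hu, upSet_apply_mem hw, upSet_apply_not_mem hj]
    group
  · have hj : ¬ cle (cjoin u w) p := fun h => hu (cle_cjoin_iff.mp h).1
    rw [upSet_apply_not_mem hu, upSet_apply_not_mem hw, upSet_apply_not_mem hj]
    group

lemma faceEl_mem_hkCubes {n : ℕ} (Gf : ℕ → Subgroup G) {F : Set (Fin n → Bool)} {c : ℕ}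
    (hF : IsFaceOfCodim F c) {g : G} (hg : g ∈ Gf c) :
    faceEl F g ∈ hkCubes Gf n :=
  Subgroup.subset_closure ⟨c, F, g, hF, hg, rfl⟩

/-! filtration basics -/

lemma Gf_antitone (Gf : ℕ → Subgroup G) (hGf : IsGroupFiltration Gf) :
    ∀ {i j : ℕ}, i ≤ j → Gf j ≤ Gf i := by
  intro i j hij
  induction j with
  | zero => simp_all
  | succ j ih =>
    rcases Nat.eq_or_lt_of_le hij with rfl | h
    · exact le_rfl
    · exact le_trans (hGf.1 j) (ih (Nat.lt_succ_iff.mp h))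

lemma Gf_normal (Gf : ℕ → Subgroup G) (hGf : IsGroupFiltration Gf) (h1 : Gf 1 = ⊤) (i : ℕ) :
    (Gf i).Normal := by
  constructor
  intro x hx g
  have hy : g⁻¹ ∈ Gf 1 := by rw [h1]; trivial
  have hc : x⁻¹ * (g⁻¹)⁻¹ * x * g⁻¹ ∈ Gf (i + 1) := hGf.2 i 1 x hx g⁻¹ hy
  have hc' : x⁻¹ * g * x * g⁻¹ ∈ Gf i := hGf.1 i (by simpa using hc)
  have : g * x * g⁻¹ = x * (x⁻¹ * g * x * g⁻¹) := by group
  rw [this]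
  exact mul_mem hx hc'

lemma Gf_comm_mem (Gf : ℕ → Subgroup G) (hGf : IsGroupFiltration Gf) {a b : ℕ} {x y : G}
    (hx : x ∈ Gf a) (hy : y ∈ Gf b) : x⁻¹ * y⁻¹ * x * y ∈ Gf (a + b) :=
  hGf.2 a b x hx y hy

lemma Gf_eq_one (Gf : ℕ → Subgroup G) (hGf : IsGroupFiltration Gf) {k : ℕ} (hk : Gf (k + 1) = ⊥)
    {a : ℕ} (ha : k + 1 ≤ a) {x : G} (hx : x ∈ Gf a) : x = 1 := by
  have := Gf_antitone Gf hGf ha hx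
  rw [hk] at this
  simpa using this

end NS13
namespace NS13

open Finset

variable {G : Type*} [Group G]

/-- Description of one coordinate of a cube morphism. -/
def CoordForm {m n : ℕ} (φ : (Fin m → Bool) → (Fin n → Bool)) (i : Fin n) : Prop :=
  (∀ v, φ v i = false) ∨ (∀ v, φ v i = true) ∨
    (∃ j, (∀ v, φ v i = v j) ∨ (∀ v, φ v i = !(v j)))

lemma boolify {x y : Bool} (h : (if x then (1:ℤ) else 0) = (if y then 1 else 0)) : x = y := by
  cases x <;> cases y <;> simp_all

lemma coordAffine_of_coordForm {m n : ℕ} {φ : (Fin m → Bool) → (Fin n → Bool)} {i : Fin n}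
    (h : CoordForm φ i) :
    ∃ (a : Fin m → ℤ) (b : ℤ), ∀ v, cubeEmb (φ v) i = (∑ j, a j * cubeEmb v j) + b := by
  rcases h with h | h | ⟨j, h | h⟩
  · exact ⟨0, 0, fun v => by simp [cubeEmb, h v]⟩
  · exact ⟨0, 1, fun v => by simp [cubeEmb, h v]⟩
  · refine ⟨Pi.single j 1, 0, fun v => ?_⟩
    rw [Finset.sum_eq_single j]
    · simp [cubeEmb, h v, Pi.single_eq_same]
    · intro j' _ hj'; simp [Pi.single_eq_of_ne hj']
    · intro hj; exact absurd (Finset.mem_univ j) hj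
  · refine ⟨Pi.single j (-1), 1, fun v => ?_⟩
    rw [Finset.sum_eq_single j]
    · cases hv : v j <;> simp [cubeEmb, h v, hv, Pi.single_eq_same]
    · intro j' _ hj'; simp [Pi.single_eq_of_ne hj']
    · intro hj; exact absurd (Finset.mem_univ j) hj

lemma isCubeMorphism_of_coordForm {m n : ℕ} {φ : (Fin m → Bool) → (Fin n → Bool)}
    (h : ∀ i, CoordForm φ i) : IsCubeMorphism φ := by
  have h' : ∀ i, ∃ (a : Fin m → ℤ) (b : ℤ),
      ∀ v, cubeEmb (φ v) i = (∑ j, a j * cubeEmb v j) + b :=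
    fun i => coordAffine_of_coordForm (h i)
  choose a b hab using h'
  refine ⟨AddMonoidHom.mk' (fun z i => ∑ j, a i j * z j) ?_, b, ?_⟩
  · intro y z
    funext i
    simp [mul_add, Finset.sum_add_distrib]
  · intro v
    funext i
    simpa using hab i v

/-- The `j`-th basis vertex. -/
def eVec {m : ℕ} (j : Fin m) : Fin m → Bool := fun j' => decide (j' = j)

lemma cubeEmb_eq_sum {m : ℕ} (v : Fin m → Bool) :
    cubeEmb v = ∑ j, (if v j then cubeEmb (eVec j) else 0) := by
  funext i
  rw [Finset.sum_apply]
  rw [Finset.sum_congr rfl (g := fun j => if i = j then (if v j then (1:ℤ) else 0) else 0)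
    (fun j _ => by by_cases hv : v j <;> by_cases hij : i = j <;> simp [cubeEmb, eVec, hv, hij])]
  rw [Finset.sum_ite_eq]
  simp [cubeEmb]

lemma coordForm_of_isCubeMorphism {m n : ℕ} {φ : (Fin m → Bool) → (Fin n → Bool)}
    (h : IsCubeMorphism φ) : ∀ i, CoordForm φ i := by
  obtain ⟨M, t, hMt⟩ := h
  intro i
  set a : Fin m → ℤ := fun j => M (cubeEmb (eVec j)) i with ha
  set b : ℤ := t i with hb
  have hval : ∀ v, (if φ v i then (1:ℤ) else 0) = (∑ j, if v j then a j else 0) + b := by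
    intro v
    have h1 : cubeEmb (φ v) i = M (cubeEmb v) i + t i := by rw [hMt v]; rfl
    have h2 : M (cubeEmb v) i = ∑ j, if v j then a j else 0 := by
      rw [cubeEmb_eq_sum v, map_sum]
      rw [Finset.sum_apply]
      apply Finset.sum_congr rfl
      intro j _
      by_cases hv : v j <;> simp [hv, ha]
    rw [← h2, ← h1]; rfl
  -- evaluate on indicator of a finset
  have hS : ∀ S : Finset (Fin m),
      (if φ (fun p => decide (p ∈ S)) i then (1:ℤ) else 0) = (∑ j ∈ S, a j) + b := by
    intro S
    rw [hval]
    congr 1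
    rw [Finset.sum_congr rfl (g := fun j => if j ∈ S then a j else 0) (fun j _ => by
      by_cases hj : j ∈ S <;> simp [hj])]
    rw [Finset.sum_ite_mem, Finset.univ_inter]
  have hrange : ∀ S : Finset (Fin m), (∑ j ∈ S, a j) + b = 0 ∨ (∑ j ∈ S, a j) + b = 1 := by
    intro S
    rw [← hS S]
    by_cases hφ : φ (fun p => decide (p ∈ S)) i <;> simp [hφ]
  have hbr : b = 0 ∨ b = 1 := by have := hrange ∅; simpa using this
  have hsingle : ∀ j, a j + b = 0 ∨ a j + b = 1 := by
    intro j; have := hrange {j}; simpa using this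
  by_cases hall : ∀ j, a j = 0
  · -- constant
    have hconst : ∀ v, (if φ v i then (1:ℤ) else 0) = b := by
      intro v
      rw [hval]
      have : (∑ j, if v j then a j else 0) = 0 := by
        apply Finset.sum_eq_zero; intro j _; by_cases hv : v j <;> simp [hv, hall j]
      rw [this, zero_add]
    rcases hbr with hb0 | hb1
    · left; intro v; have := hconst v; rw [hb0] at this
      by_cases hφ : φ v i
      · simp [hφ] at this
      · simpa using hφ
    · right; left; intro v; have := hconst v; rw [hb1] at this
      by_cases hφ : φ v i
      · exact hφ
      · simp [hφ] at this
  · push_neg at hall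
    obtain ⟨j₀, hj₀⟩ := hall
    have hothers : ∀ j, j ≠ j₀ → a j = 0 := by
      intro j hj
      by_contra hja
      have hpair : a j + a j₀ + b = 0 ∨ a j + a j₀ + b = 1 := by
        have := hrange {j, j₀}
        rwa [Finset.sum_pair hj] at this
      have h1 := hsingle j
      have h2 := hsingle j₀
      omega
    have hsum : ∀ v : Fin m → Bool, (∑ j, if v j then a j else 0) = if v j₀ then a j₀ else 0 := by
      intro v
      rw [Finset.sum_eq_single j₀]
      · intro j _ hj; by_cases hv : v j <;> simp [hv, hothers j hj]
      · intro hj; exact absurd (Finset.mem_univ j₀) hj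
    have hval' : ∀ v, (if φ v i then (1:ℤ) else 0) = (if v j₀ then a j₀ else 0) + b := by
      intro v; rw [hval, hsum]
    rcases hbr with hb0 | hb1
    · -- b = 0, a j₀ = 1, coordinate is v j₀
      have ha1 : a j₀ = 1 := by have := hsingle j₀; omega
      right; right; exact ⟨j₀, Or.inl (fun v => by
        have := hval' v
        rw [hb0, ha1, add_zero] at this
        exact boolify (by simpa using this))⟩
    · -- b = 1, a j₀ = -1, coordinate is !(v j₀)
      have ha1 : a j₀ = -1 := by have := hsingle j₀; omega
      right; right; refine ⟨j₀, Or.inr (fun v => ?_)⟩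
      have := hval' v
      rw [hb1, ha1] at this
      cases hφ : φ v i <;> cases hv : v j₀ <;> rw [hφ, hv] at this <;> simp at this ⊢

end NS13
namespace NS13

open Finset

variable {G : Type*} [Group G]

lemma preimage_face {m n : ℕ} {φ : (Fin m → Bool) → (Fin n → Bool)}
    (hφ : IsCubeMorphism φ) (I : Finset (Fin n)) (x : Fin n → Bool) :
    ({v : Fin m → Bool | ∀ i ∈ I, φ v i = x i} = ∅) ∨
    ∃ (J : Finset (Fin m)) (y : Fin m → Bool), J.card ≤ I.card ∧
      {v : Fin m → Bool | ∀ i ∈ I, φ v i = x i} = {v | ∀ j ∈ J, v j = y j} := by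
  induction I using Finset.induction_on with
  | empty =>
    right
    exact ⟨∅, (fun _ => false), le_rfl, by ext v; simp⟩
  | @insert i I hiI ih =>
    have hsplit : {v : Fin m → Bool | ∀ i' ∈ insert i I, φ v i' = x i'} =
        {v : Fin m → Bool | φ v i = x i} ∩ {v | ∀ i' ∈ I, φ v i' = x i'} := by
      ext v
      simp only [Set.mem_setOf_eq, Set.mem_inter_iff, Finset.mem_insert]
      constructor
      · intro h
        exact ⟨h i (Or.inl rfl), fun i' hi' => h i' (Or.inr hi')⟩
      · rintro ⟨h1, h2⟩ i' hi'
        rcases hi' with rfl | hi'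
        · exact h1
        · exact h2 i' hi' 
    rcases coordForm_of_isCubeMorphism hφ i with hc | hc | ⟨j, hc⟩
    · -- φ _ i = false
      cases hxi : x i
      · -- condition trivially true
        rcases ih with he | ⟨J, y, hJ, hface⟩
        · left
          rw [hsplit, he, Set.inter_empty]
        · right
          refine ⟨J, y, le_trans hJ (Finset.card_le_card (Finset.subset_insert i I)), ?_⟩
          rw [hsplit, ← hface]
          ext v; simp [hc v, hxi]
      · left
        ext v
        simp only [Set.mem_setOf_eq, Set.mem_empty_iff_false, iff_false]
        intro h
        have := h i (Finset.mem_insert_self i I)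
        rw [hc v, hxi] at this
        simp at this
    · -- φ _ i = true
      cases hxi : x i
      · left
        ext v
        simp only [Set.mem_setOf_eq, Set.mem_empty_iff_false, iff_false]
        intro h
        have := h i (Finset.mem_insert_self i I)
        rw [hc v, hxi] at this
        simp at this
      · rcases ih with he | ⟨J, y, hJ, hface⟩
        · left
          rw [hsplit, he, Set.inter_empty]
        · right
          refine ⟨J, y, le_trans hJ (Finset.card_le_card (Finset.subset_insert i I)), ?_⟩
          rw [hsplit, ← hface]
          ext v; simp [hc v, hxi]
    · -- coordinate j, direct or negated
      have hchar : ∃ r : Bool, ∀ v, (φ v i = x i ↔ v j = r) := by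
        rcases hc with hc | hc
        · exact ⟨x i, fun v => by rw [hc v]⟩
        · refine ⟨!(x i), fun v => by rw [hc v]; cases hv : v j <;> cases hx : x i <;> simp⟩
      obtain ⟨r, hr⟩ := hchar
      rcases ih with he | ⟨J, y, hJ, hface⟩
      · left
        rw [hsplit, he, Set.inter_empty]
      · by_cases hjJ : j ∈ J
        · by_cases hyr : y j = r
          · -- redundant constraint
            right
            refine ⟨J, y, le_trans hJ (Finset.card_le_card (Finset.subset_insert i I)), ?_⟩
            rw [hsplit, ← hface]
            ext v
            simp only [Set.mem_inter_iff, Set.mem_setOf_eq]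
            constructor
            · intro h; exact h.2
            · intro h
              refine ⟨?_, h⟩
              rw [hr v]
              rw [← hyr]
              have : v ∈ {v : Fin m → Bool | ∀ i' ∈ I, φ v i' = x i'} := h
              rw [hface] at this
              exact this j hjJ
          · -- contradictory constraint
            left
            ext v
            simp only [Set.mem_setOf_eq, Set.mem_empty_iff_false, iff_false]
            intro h
            have h1 : φ v i = x i := h i (Finset.mem_insert_self i I)
            have h2 : v ∈ {v : Fin m → Bool | ∀ i' ∈ I, φ v i' = x i'} :=
              fun i' hi' => h i' (Finset.mem_insert_of_mem hi')
            rw [hface] at h2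
            have h3 := h2 j hjJ
            rw [hr v] at h1
            rw [h1] at h3
            exact hyr h3.symm
        · -- new constraint
          right
          refine ⟨insert j J, Function.update y j r, ?_, ?_⟩
          · rw [Finset.card_insert_of_notMem hjJ, Finset.card_insert_of_notMem hiI]
            omega
          · rw [hsplit, hface]
            ext v
            simp only [Set.mem_inter_iff, Set.mem_setOf_eq]
            constructor
            · intro ⟨h1, h2⟩ j' hj'
              rcases Finset.mem_insert.mp hj' with rfl | hj'
              · rw [Function.update_self]
                rw [← hr v]; exact h1
              · rw [Function.update_of_ne (fun hh => hjJ (by rw [← hh]; exact hj'))]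
                exact h2 j' hj'
            · intro h
              constructor
              · rw [hr v]
                have := h j (Finset.mem_insert_self j J)
                rwa [Function.update_self] at this
              · intro j' hj'
                have := h j' (Finset.mem_insert_of_mem hj')
                rwa [Function.update_of_ne (fun hh => hjJ (by rw [← hh]; exact hj'))] at this

lemma hkCubes_comp {m n : ℕ} (Gf : ℕ → Subgroup G) (hGf : IsGroupFiltration Gf)
    {φ : (Fin m → Bool) → (Fin n → Bool)} (hφ : IsCubeMorphism φ)
    {q : (Fin n → Bool) → G} (hq : q ∈ hkCubes Gf n) : (q ∘ φ) ∈ hkCubes Gf m := by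
  induction hq using Subgroup.closure_induction with
  | mem f hf =>
    obtain ⟨c, F, g, ⟨I, x, hcard, hFeq⟩, hg, rfl⟩ := hf
    rw [faceEl_comp]
    have hpre : φ ⁻¹' F = {v : Fin m → Bool | ∀ i ∈ I, φ v i = x i} := by
      rw [hFeq]; rfl
    rcases preimage_face hφ I x with he | ⟨J, y, hJ, hface⟩
    · rw [hpre, he, faceEl_empty]
      exact one_mem _
    · rw [hpre, hface]
      refine faceEl_mem_hkCubes Gf ⟨J, y, rfl, rfl⟩ ?_
      exact Gf_antitone Gf hGf (hcard ▸ hJ) hg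
  | one => exact one_mem _
  | mul a b _ _ ha hb => exact mul_mem ha hb
  | inv a _ ha => exact inv_mem ha

end NS13
namespace NS13

open Finset

variable {G : Type*} [Group G]

/-- All vertices of the cube, sorted by weight. -/
noncomputable def vertList (n : ℕ) : List (Fin n → Bool) :=
  (Finset.univ : Finset (Fin n → Bool)).toList.mergeSort
    (fun a b => decide (weight a ≤ weight b))

lemma mem_vertList {n : ℕ} (v : Fin n → Bool) : v ∈ vertList n := by
  have := (List.mergeSort_perm (Finset.univ : Finset (Fin n → Bool)).toList
    (fun a b => decide (weight a ≤ weight b))).mem_iff (a := v)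
  rw [vertList, this]
  simp [Finset.mem_toList]

lemma nodup_vertList (n : ℕ) : (vertList n).Nodup := by
  refine (List.mergeSort_perm _ _).nodup_iff.mpr ?_
  exact Finset.nodup_toList _

lemma sorted_vertList (n : ℕ) :
    (vertList n).Pairwise (fun a b => weight a ≤ weight b) := by
  have h := List.pairwise_mergeSort (le := fun (a b : Fin n → Bool) => decide (weight a ≤ weight b))
    (fun a b c hab hbc => by simp_all; omega)
    (fun a b => by simp [Nat.le_total])
    (Finset.univ : Finset (Fin n → Bool)).toList
  refine h.imp ?_
  intro a b hab
  simpa using hab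

/-- Representation as a weight-ordered product of upper-face elements. -/
noncomputable def prodFrom {n : ℕ} (l : List (Fin n → Bool)) (γ : (Fin n → Bool) → G) :
    (Fin n → Bool) → G :=
  (l.map fun w => faceEl (upSet w) (γ w)).prod

def RepOn (Gf : ℕ → Subgroup G) {n : ℕ} (l : List (Fin n → Bool))
    (g : (Fin n → Bool) → G) : Prop :=
  ∃ γ : (Fin n → Bool) → G, (∀ v, γ v ∈ Gf (weight v)) ∧ g = prodFrom l γ

lemma prodFrom_nil {n : ℕ} (γ : (Fin n → Bool) → G) : prodFrom [] γ = 1 := rfl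

lemma prodFrom_cons {n : ℕ} (w : Fin n → Bool) (l : List (Fin n → Bool))
    (γ : (Fin n → Bool) → G) :
    prodFrom (w :: l) γ = faceEl (upSet w) (γ w) * prodFrom l γ := by
  simp [prodFrom]

lemma prodFrom_congr {n : ℕ} {l : List (Fin n → Bool)} {γ γ' : (Fin n → Bool) → G}
    (h : ∀ w ∈ l, γ w = γ' w) : prodFrom l γ = prodFrom l γ' := by
  unfold prodFrom
  congr 1
  exact List.map_congr_left (fun w hw => by rw [h w hw])

lemma repOn_one (Gf : ℕ → Subgroup G) {n : ℕ} (l : List (Fin n → Bool)) :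
    RepOn Gf l (1 : (Fin n → Bool) → G) := by
  refine ⟨fun _ => 1, fun v => one_mem _, ?_⟩
  induction l with
  | nil => rfl
  | cons w l ih => rw [prodFrom_cons, faceEl_one, one_mul]; exact ih

lemma repOn_cons (Gf : ℕ → Subgroup G) {n : ℕ} {w : Fin n → Bool} {l : List (Fin n → Bool)}
    (hw : w ∉ l) {γw : G} (hval : γw ∈ Gf (weight w)) {x : (Fin n → Bool) → G}
    (h : RepOn Gf l x) : RepOn Gf (w :: l) (faceEl (upSet w) γw * x) := by
  obtain ⟨γ, hγ, rfl⟩ := h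
  refine ⟨Function.update γ w γw, ?_, ?_⟩
  · intro v
    by_cases hv : v = w
    · subst hv; rw [Function.update_self]; exact hval
    · rw [Function.update_of_ne hv]; exact hγ v
  · rw [prodFrom_cons, Function.update_self]
    congr 1
    exact (prodFrom_congr (fun p hp => by
      rw [Function.update_of_ne (fun hh => hw (by rw [← hh]; exact hp))])).symm

lemma closed_tail {n : ℕ} {w : Fin n → Bool} {l : List (Fin n → Bool)}
    (hsort : (w :: l).Pairwise (fun a b => weight a ≤ weight b))
    (hnodup : (w :: l).Nodup)
    (hclosed : ∀ p q, q ∈ w :: l → cle q p → p ∈ w :: l) :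
    ∀ p q, q ∈ l → cle q p → p ∈ l := by
  intro p q hq hqp
  have hp : p ∈ w :: l := hclosed p q (List.mem_cons_of_mem w hq) hqp
  rcases List.mem_cons.mp hp with rfl | hp
  · -- p = w : impossible
    exfalso
    have hwq : weight p ≤ weight q := (List.pairwise_cons.mp hsort).1 q hq
    have : q = p := eq_of_cle_of_weight_le hqp hwq
    subst this
    exact (List.nodup_cons.mp hnodup).1 hq
  · exact hp

end NS13
namespace NS13

open Finset

variable {G : Type*} [Group G]

lemma insert_step (Gf : ℕ → Subgroup G) (hGf : IsGroupFiltration Gf) {k : ℕ}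
    (hk : Gf (k + 1) = ⊥) {n : ℕ} :
    ∀ (d ln a : ℕ) (u : Fin n → Bool) (γ : G) (l : List (Fin n → Bool))
      (g : (Fin n → Bool) → G),
      k + 1 - a ≤ d → l.length ≤ ln →
      l.Pairwise (fun p q => weight p ≤ weight q) → l.Nodup →
      (∀ p q, q ∈ l → cle q p → p ∈ l) →
      u ∈ l → weight u ≤ a → γ ∈ Gf a →
      RepOn Gf l g → RepOn Gf l (faceEl (upSet u) γ * g) := by
  intro d
  induction d with
  | zero =>
    intro ln a u γ l g hd _ _ _ _ _ _ hγ hg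
    have hγ1 : γ = 1 := Gf_eq_one Gf hGf hk (by omega) hγ
    rw [hγ1, faceEl_one, one_mul]
    exact hg
  | succ d ihd =>
    intro ln
    induction ln with
    | zero =>
      intro a u γ l g hd hln _ _ _ hu _ _ _
      rw [List.length_eq_zero_iff.mp (Nat.le_zero.mp hln)] at hu
      cases hu
    | succ ln ihln =>
      intro a u γ l g hd hln hsort hnodup hclosed hu hwu hγ hg
      by_cases ha : k + 1 ≤ a
      · have hγ1 : γ = 1 := Gf_eq_one Gf hGf hk ha hγ
        rw [hγ1, faceEl_one, one_mul]
        exact hg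
      cases l with
      | nil => cases hu
      | cons w l' =>
        obtain ⟨γf, hγf, rfl⟩ := hg
        have hsort' := (List.pairwise_cons.mp hsort).2
        have hnodup' := (List.nodup_cons.mp hnodup).2
        have hwnl' := (List.nodup_cons.mp hnodup).1
        have hclosed' := closed_tail hsort hnodup hclosed
        have hln' : l'.length ≤ ln := by simpa using hln
        by_cases huw : u = w
        · -- merge with the head factor
          subst huw
          rw [prodFrom_cons, ← mul_assoc, faceEl_mul]
          refine repOn_cons Gf hwnl' ?_ ⟨γf, hγf, rfl⟩
          exact mul_mem (Gf_antitone Gf hGf hwu hγ) (hγf u)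
        · have hu' : u ∈ l' := by
            rcases List.mem_cons.mp hu with h | h
            · exact absurd h huw
            · exact h
          have hww : weight w ≤ weight u := (List.pairwise_cons.mp hsort).1 u hu'
          set c : G := γ⁻¹ * (γf w)⁻¹ * γ * γf w with hc_def
          have hc : c ∈ Gf (a + weight w) := Gf_comm_mem Gf hGf hγ (hγf w)
          have hjoin_mem : cjoin u w ∈ l' :=
            hclosed' (cjoin u w) u hu' (cle_cjoin_left u w)
          have hwjoin : weight (cjoin u w) ≤ a + weight w :=
            le_trans (weight_cjoin_le u w) (Nat.add_le_add_right hwu _)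
          -- step 1 : insert the commutator term into the tail
          have hstep1 : RepOn Gf l' (faceEl (upSet (cjoin u w)) c * prodFrom l' γf) := by
            by_cases hw0 : weight w = 0
            · -- w is the bottom vertex
              have hwb : w = botv n := eq_botv_of_weight_eq_zero hw0
              have hcj : cjoin u w = u := by rw [hwb, cjoin_botv]
              rw [hcj]
              rw [hcj] at hjoin_mem
              refine ihln a u c l' (prodFrom l' γf) hd hln' hsort' hnodup' hclosed'
                hjoin_mem hwu ?_ ⟨γf, hγf, rfl⟩
              rw [hw0, Nat.add_zero] at hc
              exact hc
            · refine ihd ln (a + weight w) (cjoin u w) c l' (prodFrom l' γf)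
                (by omega) hln' hsort' hnodup' hclosed' hjoin_mem hwjoin hc ⟨γf, hγf, rfl⟩
          -- step 2 : re-insert the original face element
          have hstep2 : RepOn Gf l'
              (faceEl (upSet u) γ * (faceEl (upSet (cjoin u w)) c * prodFrom l' γf)) :=
            ihln a u γ l' _ hd hln' hsort' hnodup' hclosed' hu' hwu hγ hstep1
          -- reassemble
          have hre : faceEl (upSet u) γ * prodFrom (w :: l') γf =
              faceEl (upSet w) (γf w) *
                (faceEl (upSet u) γ * (faceEl (upSet (cjoin u w)) c * prodFrom l' γf)) := by
            rw [prodFrom_cons, ← mul_assoc, faceEl_swap u w γ (γf w)]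
            rw [← hc_def]
            group
          rw [hre]
          exact repOn_cons Gf hwnl' (hγf w) hstep2

end NS13
namespace NS13

open Finset

variable {G : Type*} [Group G]

/-- Upper-face generators. -/
def upGens (Gf : ℕ → Subgroup G) (n : ℕ) : Set ((Fin n → Bool) → G) :=
  { f | ∃ (v : Fin n → Bool) (γ : G), γ ∈ Gf (weight v) ∧ f = faceEl (upSet v) γ }

lemma weight_indicator {n : ℕ} (I : Finset (Fin n)) :
    weight (fun i => decide (i ∈ I)) = I.card := by
  unfold weight
  congr 1
  ext i
  simp

lemma face_gen_mem_closure_upGens (Gf : ℕ → Subgroup G) (hGf : IsGroupFiltration Gf) {n : ℕ} :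
    ∀ (N : ℕ) (I : Finset (Fin n)) (x : Fin n → Bool) (γ : G),
      (I.filter fun i => x i = false).card ≤ N → γ ∈ Gf I.card →
      faceEl {v : Fin n → Bool | ∀ i ∈ I, v i = x i} γ ∈ Subgroup.closure (upGens Gf n) := by
  intro N
  induction N with
  | zero =>
    intro I x γ hfil hγ
    have hx : ∀ i ∈ I, x i = true := by
      intro i hi
      by_contra hxi
      have : i ∈ I.filter fun i => x i = false := by
        simp only [Finset.mem_filter]
        exact ⟨hi, by simpa using hxi⟩
      have := Finset.card_pos.mpr ⟨i, this⟩
      omega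
    have hset : {v : Fin n → Bool | ∀ i ∈ I, v i = x i} =
        upSet (fun i => decide (i ∈ I)) := by
      ext v
      simp only [Set.mem_setOf_eq, upSet, cle, decide_eq_true_eq]
      constructor
      · intro h i hi
        rw [h i hi, hx i hi]
      · intro h i hi
        rw [h i hi, hx i hi]
    rw [hset]
    apply Subgroup.subset_closure
    exact ⟨_, γ, by rwa [weight_indicator], rfl⟩
  | succ N ihN =>
    intro I x γ hfil hγ
    by_cases hex : ∃ i₀ ∈ I, x i₀ = false
    · obtain ⟨i₀, hi₀I, hxi₀⟩ := hex
      -- split into erased face and flipped face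
      have hkey : faceEl {v : Fin n → Bool | ∀ i ∈ I, v i = x i} γ =
          faceEl {v : Fin n → Bool | ∀ i ∈ I.erase i₀, v i = x i} γ *
          faceEl {v : Fin n → Bool | ∀ i ∈ I, v i = Function.update x i₀ true i} γ⁻¹ := by
        funext v
        have hmemF : v ∈ {v : Fin n → Bool | ∀ i ∈ I, v i = x i} ↔
            ((∀ i ∈ I.erase i₀, v i = x i) ∧ v i₀ = false) := by
          simp only [Set.mem_setOf_eq]
          constructor
          · intro h
            exact ⟨fun i hi => h i (Finset.mem_of_mem_erase hi), by rw [h i₀ hi₀I, hxi₀]⟩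
          · rintro ⟨h1, h2⟩ i hi
            by_cases hii : i = i₀
            · subst hii; rw [h2, hxi₀]
            · exact h1 i (Finset.mem_erase.mpr ⟨hii, hi⟩)
        have hmemF1 : v ∈ {v : Fin n → Bool | ∀ i ∈ I, v i = Function.update x i₀ true i} ↔
            ((∀ i ∈ I.erase i₀, v i = x i) ∧ v i₀ = true) := by
          simp only [Set.mem_setOf_eq]
          constructor
          · intro h
            refine ⟨fun i hi => ?_, by rw [h i₀ hi₀I, Function.update_self]⟩
            have := h i (Finset.mem_of_mem_erase hi)
            rwa [Function.update_of_ne (Finset.mem_erase.mp hi).1] at this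
          · rintro ⟨h1, h2⟩ i hi
            by_cases hii : i = i₀
            · subst hii; rw [h2, Function.update_self]
            · rw [Function.update_of_ne hii]
              exact h1 i (Finset.mem_erase.mpr ⟨hii, hi⟩)
        simp only [Pi.mul_apply]
        by_cases hA : ∀ i ∈ I.erase i₀, v i = x i
        · cases hv0 : v i₀
          · rw [faceEl_apply_mem (hmemF.mpr ⟨hA, hv0⟩),
              faceEl_apply_mem (Set.mem_setOf_eq ▸ (fun i hi => (hA i hi))),
              faceEl_apply_not_mem (fun h => by
                have := (hmemF1.mp h).2; rw [hv0] at this; exact Bool.false_ne_true this)]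
            rw [mul_one]
          · rw [faceEl_apply_not_mem (fun h => by
                have := (hmemF.mp h).2; rw [hv0] at this; simp at this),
              faceEl_apply_mem (Set.mem_setOf_eq ▸ (fun i hi => (hA i hi))),
              faceEl_apply_mem (hmemF1.mpr ⟨hA, hv0⟩)]
            rw [mul_inv_cancel]
        · have hnotF : v ∉ {v : Fin n → Bool | ∀ i ∈ I, v i = x i} :=
            fun h => hA (hmemF.mp h).1
          have hnotF' : v ∉ {v : Fin n → Bool | ∀ i ∈ I.erase i₀, v i = x i} := hA
          have hnotF1 : v ∉ {v : Fin n → Bool | ∀ i ∈ I, v i = Function.update x i₀ true i} :=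
            fun h => hA (hmemF1.mp h).1
          rw [faceEl_apply_not_mem hnotF, faceEl_apply_not_mem hnotF',
            faceEl_apply_not_mem hnotF1, mul_one]
      rw [hkey]
      have hcount : ((I.erase i₀).filter fun i => x i = false).card ≤ N ∧
          ((I.filter fun i => Function.update x i₀ true i = false)).card ≤ N := by
        have h1 : (I.erase i₀).filter (fun i => x i = false) =
            (I.filter fun i => x i = false).erase i₀ := by
          ext i
          simp only [Finset.mem_filter, Finset.mem_erase]
          tauto
        have h2 : I.filter (fun i => Function.update x i₀ true i = false) =
            (I.filter fun i => x i = false).erase i₀ := by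
          ext i
          simp only [Finset.mem_filter, Finset.mem_erase]
          constructor
          · intro ⟨hiI, hup⟩
            by_cases hii : i = i₀
            · subst hii; rw [Function.update_self] at hup; cases hup
            · rw [Function.update_of_ne hii] at hup
              exact ⟨hii, hiI, hup⟩
          · intro ⟨hii, hiI, hxi⟩
            rw [Function.update_of_ne hii]
            exact ⟨hiI, hxi⟩
        have hmemfil : i₀ ∈ I.filter fun i => x i = false := by
          simp only [Finset.mem_filter]; exact ⟨hi₀I, hxi₀⟩
        have := Finset.card_erase_of_mem hmemfil
        constructor
        · rw [h1, this]; omega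
        · rw [h2, this]; omega
      refine mul_mem ?_ ?_
      · refine ihN (I.erase i₀) x γ hcount.1 ?_
        exact Gf_antitone Gf hGf (Finset.card_erase_le (s := I) (a := i₀)) hγ
      · exact ihN I (Function.update x i₀ true) γ⁻¹ hcount.2 (inv_mem hγ)
    · -- no false constraint: same as base case
      push_neg at hex
      have hx : ∀ i ∈ I, x i = true := by
        intro i hi
        cases hxi : x i
        · exact absurd hxi (hex i hi)
        · rfl
      have hset : {v : Fin n → Bool | ∀ i ∈ I, v i = x i} =
          upSet (fun i => decide (i ∈ I)) := by
        ext v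
        simp only [Set.mem_setOf_eq, upSet, cle, decide_eq_true_eq]
        constructor
        · intro h i hi
          rw [h i hi, hx i hi]
        · intro h i hi
          rw [h i hi, hx i hi]
      rw [hset]
      apply Subgroup.subset_closure
      exact ⟨_, γ, by rwa [weight_indicator], rfl⟩

lemma hkCubes_le_closure_upGens (Gf : ℕ → Subgroup G) (hGf : IsGroupFiltration Gf) (n : ℕ) :
    hkCubes Gf n ≤ Subgroup.closure (upGens Gf n) := by
  rw [hkCubes]
  apply Subgroup.closure_le _ |>.mpr
  rintro f ⟨c, F, g, ⟨I, x, rfl, rfl⟩, hg, rfl⟩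
  exact face_gen_mem_closure_upGens Gf hGf _ I x g le_rfl hg

lemma repOn_of_list (Gf : ℕ → Subgroup G) (hGf : IsGroupFiltration Gf) {k : ℕ}
    (hk : Gf (k + 1) = ⊥) {n : ℕ} :
    ∀ ls : List ((Fin n → Bool) → G),
      (∀ y ∈ ls, y ∈ upGens Gf n ∪ (upGens Gf n)⁻¹) → RepOn Gf (vertList n) ls.prod := by
  intro ls
  induction ls with
  | nil => intro _; exact repOn_one Gf _
  | cons f ls ih =>
    intro hls
    rw [List.prod_cons]
    have hf : f ∈ upGens Gf n := by
      rcases hls f List.mem_cons_self with h | h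
      · exact h
      · obtain ⟨v, γ, hγ, hfe⟩ := h
        refine ⟨v, γ⁻¹, inv_mem hγ, ?_⟩
        rw [← faceEl_inv]
        rw [← hfe]
        simp
    have ih' := ih (fun y hy => hls y (List.mem_cons_of_mem f hy))
    obtain ⟨v, γ, hγ, rfl⟩ := hf
    exact insert_step Gf hGf hk (k + 1) (vertList n).length (weight v) v γ _ _
      (by omega) le_rfl (sorted_vertList n) (nodup_vertList n)
      (fun p q _ _ => mem_vertList p) (mem_vertList v) le_rfl hγ ih'

lemma repOn_of_mem_hkCubes (Gf : ℕ → Subgroup G) (hGf : IsGroupFiltration Gf) {k : ℕ}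
    (hk : Gf (k + 1) = ⊥) {n : ℕ} {g : (Fin n → Bool) → G} (hg : g ∈ hkCubes Gf n) :
    RepOn Gf (vertList n) g := by
  have hmem : g ∈ Submonoid.closure (upGens Gf n ∪ (upGens Gf n)⁻¹) := by
    have := hkCubes_le_closure_upGens Gf hGf n hg
    rw [← Subgroup.mem_toSubmonoid, Subgroup.closure_toSubmonoid] at this
    exact this
  obtain ⟨ls, hls, rfl⟩ := Submonoid.exists_list_of_mem_closure hmem
  exact repOn_of_list Gf hGf hk ls hls

end NS13
namespace NS13

open Finset

variable {G : Type*} [Group G]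

lemma prodFrom_apply {n : ℕ} (l : List (Fin n → Bool)) (γ : (Fin n → Bool) → G)
    (v : Fin n → Bool) :
    prodFrom l γ v = ((l.filter fun w => decide (cle w v)).map γ).prod := by
  induction l with
  | nil => rfl
  | cons w l ih =>
    rw [prodFrom_cons, Pi.mul_apply, ih, List.filter_cons]
    by_cases hw : cle w v
    · rw [upSet_apply_mem hw]
      simp only [hw, decide_true, if_true, List.map_cons, List.prod_cons]
    · rw [upSet_apply_not_mem hw, one_mul]
      simp [hw]

lemma filter_cle_split {n : ℕ} (v : Fin n → Bool) :
    ∀ l : List (Fin n → Bool), l.Pairwise (fun a b => weight a ≤ weight b) → l.Nodup →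
      v ∈ l →
      l.filter (fun w => decide (cle w v)) =
        (l.filter fun w => decide (cle w v ∧ w ≠ v)) ++ [v] := by
  intro l
  induction l with
  | nil => intro _ _ hv; cases hv
  | cons w l ih =>
    intro hsort hnodup hv
    by_cases hwv : w = v
    · subst hwv
      have hnil : ∀ p ∈ l, ¬ (cle p w) := by
        intro p hp hcle
        have hwp : weight w ≤ weight p := (List.pairwise_cons.mp hsort).1 p hp
        have : p = w := eq_of_cle_of_weight_le hcle hwp
        subst this
        exact (List.nodup_cons.mp hnodup).1 hp
      rw [List.filter_cons, List.filter_cons]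
      simp only [cle_refl w, decide_true, if_true, ne_eq, not_true_eq_false, and_false,
        decide_false, if_false]
      have h1 : l.filter (fun w' => decide (cle w' w)) = [] := by
        apply List.filter_eq_nil_iff.mpr
        intro p hp
        simpa using hnil p hp
      have h2 : l.filter (fun w' => decide (cle w' w ∧ w' ≠ w)) = [] := by
        apply List.filter_eq_nil_iff.mpr
        intro p hp
        simp only [decide_eq_true_eq]
        rintro ⟨hcle, _⟩
        exact hnil p hp hcle
      rw [h1, h2]
      rfl
    · have hv' : v ∈ l := by
        rcases List.mem_cons.mp hv with h | h
        · exact absurd h.symm hwv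
        · exact h
      have ih' := ih (List.pairwise_cons.mp hsort).2 (List.nodup_cons.mp hnodup).2 hv'
      rw [List.filter_cons, List.filter_cons]
      by_cases hcle : cle w v
      · simp only [hcle, hwv, ne_eq, not_false_eq_true, and_true, decide_true, if_true]
        rw [ih']
        rfl
      · simp only [hcle, false_and, decide_false, if_false]
        exact ih'

lemma top_decomp (Gf : ℕ → Subgroup G) (hGf : IsGroupFiltration Gf) {k : ℕ}
    (hk : Gf (k + 1) = ⊥) (Γ : Subgroup G) {n : ℕ} {g : (Fin n → Bool) → G}
    (hg : g ∈ hkCubes Gf n) (hΓ : ∀ v, v ≠ topv n → g v ∈ Γ) :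
    ∃ γ ∈ Γ, ∃ φ ∈ Gf n, g (topv n) = γ * φ := by
  obtain ⟨γf, hγf, rfl⟩ := repOn_of_mem_hkCubes Gf hGf hk hg
  have heval : ∀ v : Fin n → Bool,
      prodFrom (vertList n) γf v =
        (((vertList n).filter fun w => decide (cle w v ∧ w ≠ v)).map γf).prod * γf v := by
    intro v
    rw [prodFrom_apply, filter_cle_split v _ (sorted_vertList n) (nodup_vertList n)
      (mem_vertList v), List.map_append, List.prod_append]
    simp
  -- all coefficients below the top lie in Γ
  have hcoef : ∀ m : ℕ, ∀ v : Fin n → Bool, weight v ≤ m → v ≠ topv n → γf v ∈ Γ := by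
    intro m
    induction m with
    | zero =>
      intro v hw hv
      have hval := heval v
      have hfil : ((vertList n).filter fun w => decide (cle w v ∧ w ≠ v)) = [] := by
        apply List.filter_eq_nil_iff.mpr
        intro p hp
        simp only [decide_eq_true_eq]
        rintro ⟨hcle, hne⟩
        have := weight_lt_of_cle_ne hcle hne
        omega
      rw [hfil] at hval
      simp only [List.map_nil, List.prod_nil, one_mul] at hval
      rw [← hval]
      exact hΓ v hv
    | succ m ihm =>
      intro v hw hv
      have hval := heval v
      have hpre : (((vertList n).filter fun w => decide (cle w v ∧ w ≠ v)).map γf).prod ∈ Γ := by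
        apply Subgroup.list_prod_mem
        intro x hx
        obtain ⟨w, hwmem, rfl⟩ := List.mem_map.mp hx
        have hw' := List.of_mem_filter hwmem
        simp only [decide_eq_true_eq] at hw'
        obtain ⟨hcle, hne⟩ := hw'
        have hlt := weight_lt_of_cle_ne hcle hne
        exact ihm w (by omega) (ne_top_of_cle_ne_top hcle hv)
      have : γf v = (((vertList n).filter fun w => decide (cle w v ∧ w ≠ v)).map γf).prod⁻¹ *
          prodFrom (vertList n) γf v := by
        rw [hval]; group
      rw [this]
      exact mul_mem (inv_mem hpre) (hΓ v hv)
  -- decompose the top value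
  have hval := heval (topv n)
  refine ⟨(((vertList n).filter fun w => decide (cle w (topv n) ∧ w ≠ topv n)).map γf).prod,
    ?_, γf (topv n), ?_, hval⟩
  · apply Subgroup.list_prod_mem
    intro x hx
    obtain ⟨w, hwmem, rfl⟩ := List.mem_map.mp hx
    have hw' := List.of_mem_filter hwmem
    simp only [decide_eq_true_eq] at hw'
    exact hcoef (weight w) w le_rfl hw'.2
  · have := hγf (topv n)
    rwa [weight_topv] at this

end NS13
namespace NS13

open Finset

variable {G : Type*} [Group G]

lemma list_prod_apply {n : ℕ} (l : List (Fin n → Bool))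
    (f : (Fin n → Bool) → ((Fin n → Bool) → G)) (w : Fin n → Bool) :
    (l.map f).prod w = (l.map fun v => f v w).prod := by
  induction l with
  | nil => rfl
  | cons a l ih => simp only [List.map_cons, List.prod_cons, Pi.mul_apply, ih]

lemma list_prod_single {α : Type*} [DecidableEq α] (x : G) (w : α) :
    ∀ l : List α, l.Nodup → w ∈ l →
      (l.map fun v => if v = w then x else 1).prod = x := by
  intro l
  induction l with
  | nil => intro _ h; cases h
  | cons a l ih =>
    intro hnodup hw
    rw [List.map_cons, List.prod_cons]
    by_cases haw : a = w
    · subst haw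
      rw [if_pos rfl]
      have hnin : a ∉ l := (List.nodup_cons.mp hnodup).1
      have : (l.map fun v => if v = a then x else 1).prod = 1 := by
        apply List.prod_eq_one
        intro y hy
        obtain ⟨v, hv, rfl⟩ := List.mem_map.mp hy
        rw [if_neg (fun h => hnin (by rw [← h]; exact hv))]
      rw [this, mul_one]
    · rw [if_neg haw, one_mul]
      apply ih (List.nodup_cons.mp hnodup).2
      rcases List.mem_cons.mp hw with h | h
      · exact absurd h.symm haw
      · exact h

/-- Existence of a correcting element at one vertex of a corner. -/
lemma delta_exists (Gf : ℕ → Subgroup G) (hGf : IsGroupFiltration Gf) (h1 : Gf 1 = ⊤) {k : ℕ}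
    (hk : Gf (k + 1) = ⊥) (Γ : Subgroup G) {n : ℕ} (q' : (Fin (n + 1) → Bool) → G ⧸ Γ)
    (hcorner : ∀ j : Fin (n + 1), ∃ p ∈ hkCubes Gf n,
      lowerFaceRestr q' j = (QuotientGroup.mk (s := Γ)) ∘ p)
    (c : (Fin (n + 1) → Bool) → G) (hc : c ∈ hkCubes Gf (n + 1))
    (v : Fin (n + 1) → Bool) (hv : v ≠ topv (n + 1))
    (hagree : ∀ w, cle w v → w ≠ v → QuotientGroup.mk (s := Γ) (c w) = q' w) :
    ∃ δ ∈ Gf (weight v), QuotientGroup.mk (s := Γ) (c v * δ) = q' v := by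
  obtain ⟨j, hj⟩ := exists_false_of_ne_top hv
  obtain ⟨p, hp, hpq⟩ := hcorner j
  set t := weight v with ht
  set supp : Finset (Fin (n + 1)) := Finset.univ.filter (fun i => v i = true) with hsupp
  have hcard : supp.card = t := rfl
  set oi := supp.orderIsoOfFin hcard with hoi
  have hmem : ∀ i, v i = true → i ∈ supp := fun i h => Finset.mem_filter.mpr ⟨Finset.mem_univ i, h⟩
  set e : (Fin t → Bool) → (Fin (n + 1) → Bool) :=
    fun u i => if h : v i = true then u (oi.symm ⟨i, hmem i h⟩) else false with he
  have he_morph : IsCubeMorphism e := by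
    apply isCubeMorphism_of_coordForm
    intro i
    by_cases hvi : v i = true
    · right; right
      exact ⟨oi.symm ⟨i, hmem i hvi⟩, Or.inl (fun u => by rw [he]; simp only; rw [dif_pos hvi])⟩
    · left
      intro u
      rw [he]; simp only; rw [dif_neg hvi]
  set ebar : (Fin t → Bool) → (Fin n → Bool) := fun u i => e u (j.succAbove i) with hebar
  have hebar_morph : IsCubeMorphism ebar := by
    apply isCubeMorphism_of_coordForm
    intro i
    by_cases hvi : v (j.succAbove i) = true
    · right; right
      refine ⟨oi.symm ⟨j.succAbove i, hmem _ hvi⟩, Or.inl (fun u => ?_)⟩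
      rw [hebar]; simp only; rw [he]; simp only; rw [dif_pos hvi]
    · left
      intro u
      rw [hebar]; simp only; rw [he]; simp only; rw [dif_neg hvi]
  have he_top : e (topv t) = v := by
    funext i
    rw [he]; simp only
    by_cases hvi : v i = true
    · rw [dif_pos hvi, hvi]; rfl
    · rw [dif_neg hvi]
      exact (Bool.not_eq_true (v i)).mp hvi |>.symm
  have he_le : ∀ u, cle (e u) v := by
    intro u i hei
    by_cases hvi : v i = true
    · exact hvi
    · rw [he] at hei; simp only at hei; rw [dif_neg hvi] at hei; cases hei
  have he_ne : ∀ u, u ≠ topv t → e u ≠ v := by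
    intro u hu heq
    obtain ⟨j₀, hj₀⟩ := exists_false_of_ne_top hu
    have hvi : v ((oi j₀ : supp) : Fin (n + 1)) = true :=
      (Finset.mem_filter.mp (oi j₀).2).2
    have : e u ((oi j₀ : supp) : Fin (n + 1)) = u j₀ := by
      rw [he]; simp only
      rw [dif_pos hvi]
      congr
      rw [show (⟨((oi j₀ : supp) : Fin (n+1)), hmem _ hvi⟩ : {x // x ∈ supp}) = oi j₀ from
        Subtype.ext rfl]
      exact oi.symm_apply_apply j₀
    rw [heq] at this
    rw [hvi, hj₀] at this
    cases this
  have hinsert : ∀ u, Fin.insertNth j false (ebar u) = e u := by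
    intro u
    funext i
    refine Fin.succAboveCases j ?_ ?_ i
    · rw [Fin.insertNth_apply_same]
      rw [he]; simp only
      rw [dif_neg (by rw [hj]; simp)]
    · intro i'
      rw [Fin.insertNth_apply_succAbove]
  -- the comparison cube
  set g : (Fin t → Bool) → G := fun u => (c (e u))⁻¹ * p (ebar u) with hg
  have hgmem : g ∈ hkCubes Gf t := by
    have h1' : (c ∘ e) ∈ hkCubes Gf t := hkCubes_comp Gf hGf he_morph hc
    have h2' : (p ∘ ebar) ∈ hkCubes Gf t := hkCubes_comp Gf hGf hebar_morph hp
    exact mul_mem (inv_mem h1') h2'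
  have hq'e : ∀ u, q' (e u) = QuotientGroup.mk (s := Γ) (p (ebar u)) := by
    intro u
    rw [← hinsert u]
    have := congrFun hpq (ebar u)
    exact this
  have hgΓ : ∀ u, u ≠ topv t → g u ∈ Γ := by
    intro u hu
    have h1' : QuotientGroup.mk (s := Γ) (c (e u)) = q' (e u) :=
      hagree (e u) (he_le u) (he_ne u hu)
    have h2' := hq'e u
    rw [hg]; simp only
    rw [← QuotientGroup.eq]
    rw [h1', h2']
  obtain ⟨γΓ, hγΓ, φ, hφ, htop⟩ := top_decomp Gf hGf hk Γ hgmem hgΓ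
  refine ⟨γΓ * φ * γΓ⁻¹, (Gf_normal Gf hGf h1 t).conj_mem φ hφ γΓ, ?_⟩
  have hgtop : g (topv t) = (c v)⁻¹ * p (ebar (topv t)) := by
    rw [hg]; simp only [he_top]
  have key : c v * (γΓ * φ * γΓ⁻¹) = p (ebar (topv t)) * γΓ⁻¹ := by
    have : γΓ * φ = g (topv t) := htop.symm
    calc c v * (γΓ * φ * γΓ⁻¹) = c v * (γΓ * φ) * γΓ⁻¹ := by group
    _ = c v * g (topv t) * γΓ⁻¹ := by rw [this]
    _ = c v * ((c v)⁻¹ * p (ebar (topv t))) * γΓ⁻¹ := by rw [hgtop]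
    _ = p (ebar (topv t)) * γΓ⁻¹ := by group
  rw [key]
  have : QuotientGroup.mk (s := Γ) (p (ebar (topv t)) * γΓ⁻¹) =
      QuotientGroup.mk (s := Γ) (p (ebar (topv t))) := by
    rw [QuotientGroup.eq]
    have : (p (ebar (topv t)) * γΓ⁻¹)⁻¹ * p (ebar (topv t)) = γΓ * ((p (ebar (topv t)))⁻¹ *
        p (ebar (topv t))) := by group
    rw [this]
    simpa using hγΓ
  rw [this, ← hq'e (topv t), he_top]

/-- Greedy completion of a corner over the quotient. -/
lemma greedy (Gf : ℕ → Subgroup G) (hGf : IsGroupFiltration Gf) (h1 : Gf 1 = ⊤) {k : ℕ}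
    (hk : Gf (k + 1) = ⊥) (Γ : Subgroup G) {n : ℕ} (q' : (Fin (n + 1) → Bool) → G ⧸ Γ)
    (hcorner : ∀ j : Fin (n + 1), ∃ p ∈ hkCubes Gf n,
      lowerFaceRestr q' j = (QuotientGroup.mk (s := Γ)) ∘ p) :
    ∀ T : ℕ, ∃ c ∈ hkCubes Gf (n + 1),
      ∀ v, weight v < T → v ≠ topv (n + 1) → QuotientGroup.mk (s := Γ) (c v) = q' v := by
  intro T
  induction T with
  | zero => exact ⟨1, one_mem _, fun v hv _ => by omega⟩
  | succ t ih =>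
    obtain ⟨c, hc, hagree⟩ := ih
    have hch : ∀ v : Fin (n + 1) → Bool, ∃ δ : G, δ ∈ Gf (weight v) ∧
        ((weight v = t ∧ v ≠ topv (n + 1)) →
          QuotientGroup.mk (s := Γ) (c v * δ) = q' v) := by
      intro v
      by_cases hv : weight v = t ∧ v ≠ topv (n + 1)
      · obtain ⟨δ, hδ, hδq⟩ := delta_exists Gf hGf h1 hk Γ q' hcorner c hc v hv.2
          (fun w hw hwv => hagree w (by
            have := weight_lt_of_cle_ne hw hwv; omega) (ne_top_of_cle_ne_top hw hv.2))
        exact ⟨δ, hδ, fun _ => hδq⟩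
      · exact ⟨1, one_mem _, fun h => absurd h hv⟩
    choose δf hδf1 hδf2 using hch
    set V : Finset (Fin (n + 1) → Bool) :=
      Finset.univ.filter (fun v => weight v = t ∧ v ≠ topv (n + 1)) with hV
    set corr : (Fin (n + 1) → Bool) → G :=
      (V.toList.map (fun v => faceEl (upSet v) (δf v))).prod with hcorr
    refine ⟨c * corr, ?_, ?_⟩
    · refine mul_mem hc ?_
      apply Subgroup.list_prod_mem
      intro x hx
      obtain ⟨v, hvmem, rfl⟩ := List.mem_map.mp hx
      exact faceEl_mem_hkCubes Gf (isFace_upSet v) (hδf1 v)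
    · intro w hw hwtop
      have hcw : (c * corr) w = c w * corr w := rfl
      rw [hcw, hcorr, list_prod_apply]
      by_cases hwt : weight w < t
      · have hall : ∀ x ∈ V.toList.map fun v => faceEl (upSet v) (δf v) w, x = 1 := by
          intro x hx
          obtain ⟨v, hvmem, rfl⟩ := List.mem_map.mp hx
          have hvV : weight v = t := by
            have := Finset.mem_toList.mp hvmem
            rw [hV] at this
            exact (Finset.mem_filter.mp this).2.1
          apply upSet_apply_not_mem
          intro hcle
          have := weight_le_of_cle hcle
          omega
        rw [List.prod_eq_one hall, mul_one]
        exact hagree w hwt hwtop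
      · have hwt' : weight w = t := by omega
        have hwV : w ∈ V := by
          rw [hV]
          exact Finset.mem_filter.mpr ⟨Finset.mem_univ w, hwt', hwtop⟩
        have heq : (V.toList.map fun v => faceEl (upSet v) (δf v) w) =
            V.toList.map fun v => if v = w then δf w else 1 := by
          apply List.map_congr_left
          intro v hvmem
          have hvV : weight v = t := by
            have := Finset.mem_toList.mp hvmem
            rw [hV] at this
            exact (Finset.mem_filter.mp this).2.1
          by_cases hvw : v = w
          · subst hvw
            rw [if_pos rfl]
            exact upSet_apply_mem (cle_refl v) _
          · rw [if_neg hvw]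
            apply upSet_apply_not_mem
            intro hcle
            exact hvw (eq_of_cle_of_weight_le hcle (by omega))
        rw [heq, list_prod_single (δf w) w V.toList (Finset.nodup_toList V)
          (Finset.mem_toList.mpr hwV)]
        exact hδf2 w ⟨hwt', hwtop⟩

end NS13
theorem stmt13 {G : Type*} [Group G] (Gf : ℕ → Subgroup G) (hGf : IsGroupFiltration Gf)
    (h0 : Gf 0 = ⊤) (h1 : Gf 1 = ⊤) {k : ℕ} (hk : Gf (k + 1) = ⊥)
    (hmin : ∀ j : ℕ, Gf (j + 1) = ⊥ → k ≤ j) (Γ : Subgroup G) :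
    IsKStepNilspace
      (fun n (f : (Fin n → Bool) → G ⧸ Γ) =>
        ∃ q ∈ hkCubes Gf n, f = (QuotientGroup.mk (s := Γ)) ∘ q) k := by
  classical
  set C : ∀ n, ((Fin n → Bool) → G ⧸ Γ) → Prop :=
    fun n (f : (Fin n → Bool) → G ⧸ Γ) =>
      ∃ q ∈ hkCubes Gf n, f = (QuotientGroup.mk (s := Γ)) ∘ q with hC
  -- composition
  have hcomp : ∀ (m n : ℕ) (φ : (Fin m → Bool) → (Fin n → Bool)), IsCubeMorphism φ →
      ∀ q, C n q → C m (q ∘ φ) := by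
    intro m n φ hφ q hq
    obtain ⟨p, hp, rfl⟩ := hq
    exact ⟨p ∘ φ, NS13.hkCubes_comp Gf hGf hφ hp, rfl⟩
  -- ergodicity
  have herg : ∀ q : (Fin 1 → Bool) → G ⧸ Γ, C 1 q := by
    intro q
    obtain ⟨a, ha⟩ := QuotientGroup.mk_surjective (q (fun _ => false))
    obtain ⟨b, hb⟩ := QuotientGroup.mk_surjective (q (fun _ => true))
    set F1 : Set (Fin 1 → Bool) :=
      {v : Fin 1 → Bool | ∀ i ∈ (Finset.univ : Finset (Fin 1)), v i = true} with hF1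
    refine ⟨faceEl Set.univ a * faceEl F1 (a⁻¹ * b), ?_, ?_⟩
    · refine mul_mem ?_ ?_
      · refine NS13.faceEl_mem_hkCubes Gf (c := 0) ⟨∅, (fun _ => true), rfl, ?_⟩
          (by rw [h0]; trivial)
        ext v; simp
      · exact NS13.faceEl_mem_hkCubes Gf (c := 1) ⟨Finset.univ, (fun _ => true), by simp, by rfl⟩
          (by rw [h1]; trivial)
    · funext v
      have hvuniv : v ∈ (Set.univ : Set (Fin 1 → Bool)) := Set.mem_univ v
      simp only [Function.comp_apply, Pi.mul_apply]
      rw [NS13.faceEl_apply_mem hvuniv]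
      cases hv : v 0
      · have hveq : v = fun _ => false := funext fun i => by
          rw [Subsingleton.elim i 0]; exact hv
        have hnot : v ∉ F1 := by
          rw [hF1]
          simp only [Set.mem_setOf_eq, Finset.mem_univ, forall_const, not_forall]
          exact ⟨0, by rw [hv]; simp⟩
        rw [NS13.faceEl_apply_not_mem hnot, mul_one, ha, hveq]
      · have hveq : v = fun _ => true := funext fun i => by
          rw [Subsingleton.elim i 0]; exact hv
        have hmem : v ∈ F1 := by
          rw [hF1]
          simp only [Set.mem_setOf_eq, Finset.mem_univ, forall_const]
          intro i; rw [Subsingleton.elim i 0]; exact hv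
        rw [NS13.faceEl_apply_mem hmem, hveq]
        rw [show a * (a⁻¹ * b) = b by group, hb]
  -- corner completion, at every level
  have hcompl : ∀ n (q' : (Fin (n + 1) → Bool) → G ⧸ Γ), IsNSCorner C n q' →
      ∃ c ∈ hkCubes Gf (n + 1),
        ∀ v, v ≠ NS13.topv (n + 1) → QuotientGroup.mk (s := Γ) (c v) = q' v := by
    intro n q' hq'
    obtain ⟨c, hc, hcv⟩ := NS13.greedy Gf hGf h1 hk Γ q' hq' (n + 2)
    refine ⟨c, hc, fun v hv => hcv v ?_ hv⟩
    have : weight v ≤ n + 1 := by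
      have h := Finset.card_filter_le (Finset.univ : Finset (Fin (n + 1)))
        (fun i => v i = true)
      simpa [weight] using h
    omega
  refine ⟨⟨hcomp, herg, ?_⟩, ?_⟩
  · -- completion axiom
    intro n q' hq'
    obtain ⟨c, hc, hcv⟩ := hcompl n q' hq'
    exact ⟨(QuotientGroup.mk (s := Γ)) ∘ c, ⟨c, hc, rfl⟩, fun v hv => hcv v hv⟩
  · -- unique completion at level k
    intro q' hq'
    obtain ⟨c, hc, hcv⟩ := hcompl k q' hq'
    refine ⟨(QuotientGroup.mk (s := Γ)) ∘ c, ⟨⟨c, hc, rfl⟩, fun v hv => hcv v hv⟩, ?_⟩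
    rintro y ⟨⟨cy, hcy, rfl⟩, hyq⟩
    funext v
    by_cases hv : v = NS13.topv (k + 1)
    · subst hv
      -- compare the two cubes
      have hgmem : (fun w => (cy w)⁻¹ * c w) ∈ hkCubes Gf (k + 1) :=
        mul_mem (inv_mem hcy) hc
      have hgΓ : ∀ w, w ≠ NS13.topv (k + 1) → (cy w)⁻¹ * c w ∈ Γ := by
        intro w hw
        rw [← QuotientGroup.eq]
        have hy' : QuotientGroup.mk (s := Γ) (cy w) = q' w := hyq w hw
        have hc' : QuotientGroup.mk (s := Γ) (c w) = q' w := hcv w hw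
        rw [hy', hc']
      obtain ⟨γΓ, hγΓ, φ, hφ, htop⟩ := NS13.top_decomp Gf hGf hk Γ hgmem hgΓ
      have hφ1 : φ = 1 := NS13.Gf_eq_one Gf hGf hk le_rfl hφ
      have : (cy (NS13.topv (k + 1)))⁻¹ * c (NS13.topv (k + 1)) ∈ Γ := by
        rw [htop, hφ1, mul_one]; exact hγΓ
      show QuotientGroup.mk (s := Γ) (cy _) = QuotientGroup.mk (s := Γ) (c _)
      rw [QuotientGroup.eq]
      exact this
    · have hy' : QuotientGroup.mk (s := Γ) (cy v) = q' v := hyq v hv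
      have hc' : QuotientGroup.mk (s := Γ) (c v) = q' v := hcv v hv
      show QuotientGroup.mk (s := Γ) (cy v) = QuotientGroup.mk (s := Γ) (c v)
      rw [hy', hc']
end

section
/- Let X be a 1-step nilspace and fix e ∈ X. Define an operation + on X by: x + y is the unique z ∈ X such that the map q: {0,1}^2 → X with q(00) = e, q(10) = x, q(01) = y, q(11) = z is in C^2(X). Then (X, +) is an abelian group with identity e. -/
open Finset

section Stmt14Aux

variable {X : Type*}

/-- The 2-cube pattern with corner `e` and values `x, y, z`. -/
def pat (e x y z : X) : (Fin 2 → Bool) → X :=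
  fun v => if v 0 then (if v 1 then z else x) else (if v 1 then y else e)

def swap2 : (Fin 2 → Bool) → (Fin 2 → Bool) := fun v => ![v 1, v 0]
def refl0 : (Fin 2 → Bool) → (Fin 2 → Bool) := fun v => ![!(v 0), v 1]
def proj1 : (Fin 2 → Bool) → (Fin 1 → Bool) := fun v _ => v 0
def diag01 : (Fin 2 → Bool) → (Fin 3 → Bool) := fun u => ![u 0, u 0, u 1]
def diag12 : (Fin 2 → Bool) → (Fin 3 → Bool) := fun u => ![u 0, u 1, u 1]

lemma morph_swap2 : IsCubeMorphism swap2 := by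
  refine ⟨AddMonoidHom.mk' (fun f => ![f 1, f 0]) ?_, 0, ?_⟩
  · intro a b; funext i; fin_cases i <;> simp
  · intro v; funext i; fin_cases i <;> simp [cubeEmb, swap2] <;> split_ifs <;> simp_all

lemma morph_refl0 : IsCubeMorphism refl0 := by
  refine ⟨AddMonoidHom.mk' (fun f => ![-(f 0), f 1]) ?_, ![1, 0], ?_⟩
  · intro a b; funext i; fin_cases i <;> simp; ring
  · intro v; funext i; fin_cases i <;> cases hv : v 0 <;> simp [cubeEmb, refl0, hv]

lemma morph_proj1 : IsCubeMorphism proj1 := by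
  refine ⟨AddMonoidHom.mk' (fun f _ => f 0) ?_, 0, ?_⟩
  · intro a b; funext i; simp
  · intro v; funext i; simp [cubeEmb, proj1] <;> split_ifs <;> simp_all

lemma morph_diag01 : IsCubeMorphism diag01 := by
  refine ⟨AddMonoidHom.mk' (fun f => ![f 0, f 0, f 1]) ?_, 0, ?_⟩
  · intro a b; funext i; fin_cases i <;> simp
  · intro v; funext i; fin_cases i <;> simp [cubeEmb, diag01] <;> split_ifs <;> simp_all

lemma morph_diag12 : IsCubeMorphism diag12 := by
  refine ⟨AddMonoidHom.mk' (fun f => ![f 0, f 1, f 1]) ?_, 0, ?_⟩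
  · intro a b; funext i; fin_cases i <;> simp
  · intro v; funext i; fin_cases i <;> simp [cubeEmb, diag12] <;> split_ifs <;> simp_all

/-- The 3-corner used for associativity. -/
def Q3 (e x y z a b c : X) : (Fin 3 → Bool) → X := fun v =>
  if v 0 then (if v 1 then (if v 2 then e else a) else (if v 2 then b else x))
  else (if v 1 then (if v 2 then c else y) else (if v 2 then z else e))

/-- The corner used for inverses. -/
def cornerInv (e x : X) : (Fin 2 → Bool) → X :=
  fun v => if v 0 then e else if v 1 then e else x

lemma ins3_0_0 (v : Fin 2 → Bool) :
    (Fin.insertNth (α := fun _ => Bool) (0:Fin 3) false v) 0 = false := rfl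
lemma ins3_0_1 (v : Fin 2 → Bool) :
    (Fin.insertNth (α := fun _ => Bool) (0:Fin 3) false v) 1 = v 0 := rfl
lemma ins3_0_2 (v : Fin 2 → Bool) :
    (Fin.insertNth (α := fun _ => Bool) (0:Fin 3) false v) 2 = v 1 := rfl
lemma ins3_1_0 (v : Fin 2 → Bool) :
    (Fin.insertNth (α := fun _ => Bool) (1:Fin 3) false v) 0 = v 0 := rfl
lemma ins3_1_1 (v : Fin 2 → Bool) :
    (Fin.insertNth (α := fun _ => Bool) (1:Fin 3) false v) 1 = false := rfl
lemma ins3_1_2 (v : Fin 2 → Bool) :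
    (Fin.insertNth (α := fun _ => Bool) (1:Fin 3) false v) 2 = v 1 := rfl
lemma ins3_2_0 (v : Fin 2 → Bool) :
    (Fin.insertNth (α := fun _ => Bool) (2:Fin 3) false v) 0 = v 0 := rfl
lemma ins3_2_1 (v : Fin 2 → Bool) :
    (Fin.insertNth (α := fun _ => Bool) (2:Fin 3) false v) 1 = v 1 := rfl
lemma ins3_2_2 (v : Fin 2 → Bool) :
    (Fin.insertNth (α := fun _ => Bool) (2:Fin 3) false v) 2 = false := rfl

end Stmt14Aux

theorem stmt14 {X : Type*} (C : ∀ n, ((Fin n → Bool) → X) → Prop)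
    (hns : IsKStepNilspace C 1) (e : X) (add : X → X → X)
    (hadd : ∀ x y z : X, add x y = z ↔
      C 2 (fun v : Fin 2 → Bool =>
        if v 0 then (if v 1 then z else x) else (if v 1 then y else e))) :
    (∀ x y : X, add x y = add y x) ∧
    (∀ x y z : X, add (add x y) z = add x (add y z)) ∧
    (∀ x : X, add x e = x) ∧
    (∀ x : X, ∃ y : X, add x y = e) := by
  obtain ⟨⟨hcomp, herg, hcompl⟩, -⟩ := hns
  have hpat : ∀ x y z : X, add x y = z ↔ C 2 (pat e x y z) := hadd
  have hdef : ∀ x y : X, C 2 (pat e x y (add x y)) := fun x y => (hpat x y _).mp rfl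
  -- commutativity
  have hcomm : ∀ x y : X, add x y = add y x := by
    intro x y
    have h2 := hcomp 2 2 _ morph_swap2 _ (hdef x y)
    have heq : pat e x y (add x y) ∘ swap2 = pat e y x (add x y) := by
      funext v; cases h0 : v 0 <;> cases h1 : v 1 <;>
        simp [pat, swap2, Function.comp, h0, h1]
    rw [heq] at h2
    exact ((hpat y x (add x y)).mpr h2).symm
  -- identity
  have hid : ∀ x : X, add x e = x := by
    intro x
    have h2 := hcomp 2 1 _ morph_proj1 _ (herg (fun u => if u 0 then x else e))
    have heq : (fun u : Fin 1 → Bool => if u 0 then x else e) ∘ proj1 = pat e x e x := by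
      funext v; cases h0 : v 0 <;> cases h1 : v 1 <;>
        simp [pat, proj1, Function.comp, h0, h1]
    rw [heq] at h2
    exact (hpat x e x).mpr h2
  -- associativity
  have hassoc : ∀ x y z : X, add (add x y) z = add x (add y z) := by
    intro x y z
    have hcorner : IsNSCorner C 2 (Q3 e x y z (add x y) (add x z) (add y z)) := by
      have hf0 : C 2 (lowerFaceRestr (Q3 e x y z (add x y) (add x z) (add y z)) 0) := by
        have heq : lowerFaceRestr (Q3 e x y z (add x y) (add x z) (add y z)) 0
            = pat e y z (add y z) := by
          funext v; cases h0 : v 0 <;> cases h1 : v 1 <;>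
            simp [lowerFaceRestr, Q3, pat, ins3_0_0, ins3_0_1, ins3_0_2, h0, h1]
        rw [heq]; exact hdef y z
      have hf1 : C 2 (lowerFaceRestr (Q3 e x y z (add x y) (add x z) (add y z)) 1) := by
        have heq : lowerFaceRestr (Q3 e x y z (add x y) (add x z) (add y z)) 1
            = pat e x z (add x z) := by
          funext v; cases h0 : v 0 <;> cases h1 : v 1 <;>
            simp [lowerFaceRestr, Q3, pat, ins3_1_0, ins3_1_1, ins3_1_2, h0, h1]
        rw [heq]; exact hdef x z
      have hf2 : C 2 (lowerFaceRestr (Q3 e x y z (add x y) (add x z) (add y z)) 2) := by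
        have heq : lowerFaceRestr (Q3 e x y z (add x y) (add x z) (add y z)) 2
            = pat e x y (add x y) := by
          funext v; cases h0 : v 0 <;> cases h1 : v 1 <;>
            simp [lowerFaceRestr, Q3, pat, ins3_2_0, ins3_2_1, ins3_2_2, h0, h1]
        rw [heq]; exact hdef x y
      intro j; fin_cases j
      · exact hf0
      · exact hf1
      · exact hf2
    obtain ⟨Q, hQC, hQeq⟩ := hcompl 2 _ hcorner
    have qFFF : Q ![false, false, false] = e := by
      rw [hQeq _ (fun h => by simpa using congrFun h 0)]; rfl
    have qTTF : Q ![true, true, false] = add x y := by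
      rw [hQeq _ (fun h => by simpa using congrFun h 2)]; rfl
    have qTFF : Q ![true, false, false] = x := by
      rw [hQeq _ (fun h => by simpa using congrFun h 1)]; rfl
    have qFFT : Q ![false, false, true] = z := by
      rw [hQeq _ (fun h => by simpa using congrFun h 0)]; rfl
    have qFTT : Q ![false, true, true] = add y z := by
      rw [hQeq _ (fun h => by simpa using congrFun h 0)]; rfl
    have h1 := hcomp 2 3 _ morph_diag01 _ hQC
    have heq1 : Q ∘ diag01 = pat e (add x y) z (Q ![true, true, true]) := by
      funext u; cases h0 : u 0 <;> cases h1 : u 1 <;>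
        simp [Function.comp, diag01, pat, h0, h1, qFFF, qTTF, qFFT]
    rw [heq1] at h1
    have ha1 : add (add x y) z = Q ![true, true, true] := (hpat _ _ _).mpr h1
    have h2 := hcomp 2 3 _ morph_diag12 _ hQC
    have heq2 : Q ∘ diag12 = pat e x (add y z) (Q ![true, true, true]) := by
      funext u; cases h0 : u 0 <;> cases h1 : u 1 <;>
        simp [Function.comp, diag12, pat, h0, h1, qFFF, qTFF, qFTT]
    rw [heq2] at h2
    have ha2 : add x (add y z) = Q ![true, true, true] := (hpat _ _ _).mpr h2
    rw [ha1, ha2]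
  -- inverses
  have hinv : ∀ x : X, ∃ y : X, add x y = e := by
    intro x
    have hcorner : IsNSCorner C 1 (cornerInv e x) := fun j => herg _
    obtain ⟨q, hqC, hqeq⟩ := hcompl 1 _ hcorner
    have qTF : q ![true, false] = e := by
      rw [hqeq _ (fun h => by simpa using congrFun h 1)]; rfl
    have qFF : q ![false, false] = x := by
      rw [hqeq _ (fun h => by simpa using congrFun h 0)]; rfl
    have qFT : q ![false, true] = e := by
      rw [hqeq _ (fun h => by simpa using congrFun h 0)]; rfl
    have h2 := hcomp 2 2 _ morph_refl0 _ hqC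
    have heq : q ∘ refl0 = pat e x (q ![true, true]) e := by
      funext v; cases h0 : v 0 <;> cases h1 : v 1 <;>
        simp [Function.comp, refl0, pat, h0, h1, qTF, qFF, qFT]
    rw [heq] at h2
    exact ⟨q ![true, true], (hpat x _ e).mpr h2⟩
  exact ⟨hcomm, hassoc, hid, hinv⟩
end
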